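/- arXiv:1503.03819 — 7 statements merged into one kernel-verified Lean document; each statement's English description precedes it below -/
import Mathlib

section
/- Let 0 < z < 1, let t > z and let a < b be real numbers. Then, as λ → 0⁺ with λ ∈ (0,1), the probability ℙ( X i ≤ t·log(1/λ) for every integer i with ⌊a·λ^(−z)⌋ ≤ i ≤ ⌊b·λ^(−z)⌋ ) tends to 1. -/
open MeasureTheory ProbabilityTheory Filter

theorem statement1
    {Ω : Type*} [MeasurableSpace Ω] (μ : Measure Ω) [IsProbabilityMeasure μ]
    (X : ℤ → Ω → ℝ) (hmeas : ∀ i, Measurable (X i))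
    (hindep : iIndepFun X μ)
    (hexp : ∀ (i : ℤ) (s : ℝ), 0 ≤ s → μ {ω | s < X i ω} = ENNReal.ofReal (Real.exp (-s)))
    (t z a b : ℝ) (hz0 : 0 < z) (hz1 : z < 1) (hzt : z < t) (hab : a < b) :
    Tendsto
      (fun l : ℝ =>
        μ {ω | ∀ i : ℤ, ⌊a * l ^ (-z)⌋ ≤ i → i ≤ ⌊b * l ^ (-z)⌋ →
            X i ω ≤ t * Real.log (1 / l)})
      (nhdsWithin 0 (Set.Ioo 0 1)) (nhds 1) := by
  have ht0 : 0 < t := hz0.trans hzt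
  have hc0 : 0 < t - z := sub_pos.mpr hzt
  set F : ℝ → Set Ω := fun l =>
    ⋃ i ∈ Finset.Icc ⌊a * l ^ (-z)⌋ ⌊b * l ^ (-z)⌋, {ω | t * Real.log (1 / l) < X i ω}
    with hF
  have hFmeas : ∀ l, MeasurableSet (F l) := fun l =>
    Finset.measurableSet_biUnion _ fun i _ => measurableSet_lt measurable_const (hmeas i)
  have hset : ∀ l : ℝ, {ω | ∀ i : ℤ, ⌊a * l ^ (-z)⌋ ≤ i → i ≤ ⌊b * l ^ (-z)⌋ →
      X i ω ≤ t * Real.log (1 / l)} = (F l)ᶜ := by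
    intro l
    ext ω
    simp only [hF, Set.mem_setOf_eq, Set.mem_compl_iff, Set.mem_iUnion, not_exists,
      Finset.mem_Icc, not_lt, exists_prop]
    constructor
    · rintro h i ⟨⟨h1, h2⟩, h3⟩
      exact absurd (h i h1 h2) (not_le.mpr h3)
    · intro h i h1 h2
      by_contra hlt
      exact h i ⟨⟨h1, h2⟩, lt_of_not_ge hlt⟩
  have hbound : ∀ l ∈ Set.Ioo (0:ℝ) 1,
      μ (F l) ≤ ENNReal.ofReal ((b - a + 2) * l ^ (t - z)) := by
    intro l hl
    obtain ⟨hl0, hl1⟩ := hl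
    have hlog : 0 ≤ Real.log (1 / l) := Real.log_nonneg (by
      rw [le_div_iff₀ hl0]; linarith)
    have hs : 0 ≤ t * Real.log (1 / l) := mul_nonneg ht0.le hlog
    have hexp' : ∀ i : ℤ, μ {ω | t * Real.log (1 / l) < X i ω} = ENNReal.ofReal (l ^ t) := by
      intro i
      rw [hexp i _ hs]
      congr 1
      rw [Real.rpow_def_of_pos hl0]
      congr 1
      rw [Real.log_div one_ne_zero (ne_of_gt hl0), Real.log_one]
      ring
    have hx0 : (0:ℝ) < l ^ (-z) := Real.rpow_pos_of_pos hl0 _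
    set m : ℤ := ⌊a * l ^ (-z)⌋ with hm
    set n : ℤ := ⌊b * l ^ (-z)⌋ with hn
    set I : Finset ℤ := Finset.Icc m n with hI
    have hFl : F l = ⋃ i ∈ I, {ω | t * Real.log (1 / l) < X i ω} := rfl
    have hcard : (I.card : ℝ) ≤ (b - a) * l ^ (-z) + 2 := by
      rcases le_or_gt m n with hmn | hmn
      · have h1 : (n : ℝ) ≤ b * l ^ (-z) := Int.floor_le _
        have h2 : a * l ^ (-z) - 1 < (m : ℝ) := Int.sub_one_lt_floor _
        rw [hI, Int.card_Icc]
        have hpos : (0:ℤ) ≤ n + 1 - m := by omega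
        have hcc : (((n + 1 - m).toNat : ℕ) : ℝ) = (n : ℝ) + 1 - m := by
          rw [show (((n + 1 - m).toNat : ℕ) : ℝ) = (((n + 1 - m).toNat : ℤ) : ℝ) by push_cast; ring,
            Int.toNat_of_nonneg hpos]
          push_cast; ring
        rw [hcc]
        nlinarith
      · rw [hI, Finset.Icc_eq_empty (not_le.mpr hmn)]
        simp only [Finset.card_empty, Nat.cast_zero]
        nlinarith
    calc μ (F l) ≤ Finset.sum I (fun i => μ {ω | t * Real.log (1 / l) < X i ω}) := by
          rw [hFl]; exact measure_biUnion_finset_le _ _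
      _ = (I.card : ENNReal) * ENNReal.ofReal (l ^ t) := by
          rw [Finset.sum_congr rfl fun i _ => hexp' i, Finset.sum_const, nsmul_eq_mul]
      _ = ENNReal.ofReal ((I.card : ℝ) * l ^ t) := by
          rw [ENNReal.ofReal_mul (by positivity), ENNReal.ofReal_natCast]
      _ ≤ ENNReal.ofReal ((b - a + 2) * l ^ (t - z)) := by
          apply ENNReal.ofReal_le_ofReal
          have h1 : l ^ (-z) * l ^ t = l ^ (t - z) := by
            rw [← Real.rpow_add hl0]; ring_nf
          have h2 : l ^ t ≤ l ^ (t - z) :=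
            Real.rpow_le_rpow_of_exponent_ge hl0 hl1.le (by linarith)
          have h3 : (0:ℝ) < l ^ t := Real.rpow_pos_of_pos hl0 _
          calc (I.card : ℝ) * l ^ t
              ≤ ((b - a) * l ^ (-z) + 2) * l ^ t := by nlinarith
            _ = (b - a) * (l ^ (-z) * l ^ t) + 2 * l ^ t := by ring
            _ ≤ (b - a) * l ^ (t - z) + 2 * l ^ (t - z) := by
                rw [h1]; nlinarith
            _ = (b - a + 2) * l ^ (t - z) := by ring
  have hFto : Tendsto (fun l => μ (F l)) (nhdsWithin 0 (Set.Ioo 0 1)) (nhds 0) := by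
    have hg : Tendsto (fun l : ℝ => ENNReal.ofReal ((b - a + 2) * l ^ (t - z)))
        (nhdsWithin 0 (Set.Ioo 0 1)) (nhds 0) := by
      have hcont : ContinuousAt (fun x : ℝ => x ^ (t - z)) 0 :=
        Real.continuousAt_rpow_const 0 _ (Or.inr hc0.le)
      have hreal : Tendsto (fun l : ℝ => (b - a + 2) * l ^ (t - z))
          (nhdsWithin 0 (Set.Ioo 0 1)) (nhds 0) := by
        have := (hcont.tendsto.const_mul (b - a + 2)).mono_left
          (nhdsWithin_le_nhds (s := Set.Ioo (0:ℝ) 1))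
        rwa [Real.zero_rpow (ne_of_gt hc0), mul_zero] at this
      have := (ENNReal.continuous_ofReal.tendsto 0).comp hreal
      simpa [Function.comp_def] using this
    refine tendsto_of_tendsto_of_tendsto_of_le_of_le' tendsto_const_nhds hg
      (Eventually.of_forall fun l => zero_le) ?_
    exact eventually_nhdsWithin_of_forall hbound
  have heq : (fun l : ℝ =>
      μ {ω | ∀ i : ℤ, ⌊a * l ^ (-z)⌋ ≤ i → i ≤ ⌊b * l ^ (-z)⌋ →
          X i ω ≤ t * Real.log (1 / l)}) = fun l => 1 - μ (F l) := by
    funext l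
    rw [hset l, prob_compl_eq_one_sub (hFmeas l)]
  rw [heq]
  have := ENNReal.Tendsto.sub (tendsto_const_nhds (x := (1:ENNReal))) hFto
    (Or.inl ENNReal.one_ne_top)
  simpa using this
end

section
/- Let t ≥ 1 and let a < b be real numbers. Then, as λ → 0⁺ with λ ∈ (0,1), the probability ℙ( X i ≤ t·log(1/λ) for every integer i with ⌊a·m_λ⌋ ≤ i ≤ ⌊b·m_λ⌋ ) tends to 1. -/
open MeasureTheory ProbabilityTheory Filter

/-- The intermediate space scale `m_λ = ⌊1/(λ·(log(1/λ))²)⌋`. -/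
noncomputable def mLam (l : ℝ) : ℤ := ⌊1 / (l * (Real.log (1 / l)) ^ 2)⌋

theorem statement5
    {Ω : Type*} [MeasurableSpace Ω] (μ : Measure Ω) [IsProbabilityMeasure μ]
    (X : ℤ → Ω → ℝ) (hmeas : ∀ i, Measurable (X i))
    (hindep : iIndepFun X μ)
    (hexp : ∀ (i : ℤ) (s : ℝ), 0 ≤ s → μ {ω | s < X i ω} = ENNReal.ofReal (Real.exp (-s)))
    (t a b : ℝ) (ht : 1 ≤ t) (hab : a < b) :
    Tendsto
      (fun l : ℝ =>
        μ {ω | ∀ i : ℤ, ⌊a * (mLam l : ℝ)⌋ ≤ i → i ≤ ⌊b * (mLam l : ℝ)⌋ →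
            X i ω ≤ t * Real.log (1 / l)})
      (nhdsWithin 0 (Set.Ioo 0 1)) (nhds 1) := by
  set S : ℝ → Finset ℤ := fun l => Finset.Icc ⌊a * (mLam l : ℝ)⌋ ⌊b * (mLam l : ℝ)⌋ with hS
  set c : ℝ → ℝ := fun l => ((S l).card : ℝ) * l with hc
  -- the count times l tends to 0
  have hLpos : ∀ l ∈ Set.Ioo (0:ℝ) 1, 0 < Real.log (1 / l) := by
    intro l hl
    apply Real.log_pos
    rw [lt_div_iff₀ hl.1]
    simpa using hl.2
  have hcard : ∀ l ∈ Set.Ioo (0:ℝ) 1,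
      c l ≤ (b - a) / (Real.log (1 / l)) ^ 2 + 2 * l := by
    intro l hl
    have hL := hLpos l hl
    have hm0 : (0:ℝ) ≤ (mLam l : ℝ) := by
      have : (0:ℤ) ≤ mLam l := Int.floor_nonneg.2
        (one_div_nonneg.2 (le_of_lt (mul_pos hl.1 (pow_pos hL 2))))
      exact_mod_cast this
    have hmle : (mLam l : ℝ) ≤ 1 / (l * (Real.log (1 / l)) ^ 2) :=
      Int.floor_le _
    have hcard1 : ((S l).card : ℝ) ≤ (b - a) * (mLam l : ℝ) + 2 := by
      rw [hS]
      rw [Int.card_Icc]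
      have hq : ((⌊b * (mLam l : ℝ)⌋ : ℤ) : ℝ) ≤ b * (mLam l : ℝ) := Int.floor_le _
      have hp : a * (mLam l : ℝ) - 1 ≤ ((⌊a * (mLam l : ℝ)⌋ : ℤ) : ℝ) :=
        le_of_lt (by linarith [Int.lt_floor_add_one (a * (mLam l : ℝ))])
      have h0 : (0:ℝ) ≤ (b - a) * (mLam l : ℝ) + 2 := by
        have : (0:ℝ) ≤ (b - a) * (mLam l : ℝ) :=
          mul_nonneg (by linarith) hm0
        linarith
      rcases le_or_gt (⌊b * (mLam l : ℝ)⌋ + 1 - ⌊a * (mLam l : ℝ)⌋) 0 with hk | hk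
      · rw [Int.toNat_of_nonpos hk]
        simpa using h0
      · have h2 : (((⌊b * (mLam l : ℝ)⌋ + 1 - ⌊a * (mLam l : ℝ)⌋).toNat : ℕ) : ℝ)
            = ((⌊b * (mLam l : ℝ)⌋ + 1 - ⌊a * (mLam l : ℝ)⌋ : ℤ) : ℝ) := by
          exact_mod_cast congrArg (Int.cast : ℤ → ℝ) (Int.toNat_of_nonneg hk.le)
        rw [h2]
        push_cast
        nlinarith
    have hml : (mLam l : ℝ) * l ≤ 1 / (Real.log (1 / l)) ^ 2 := by
      have := mul_le_mul_of_nonneg_right hmle (le_of_lt hl.1)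
      calc (mLam l : ℝ) * l ≤ 1 / (l * (Real.log (1 / l)) ^ 2) * l := this
        _ = 1 / (Real.log (1 / l)) ^ 2 := by
            have hne : l * Real.log (1 / l) ^ 2 ≠ 0 :=
              ne_of_gt (mul_pos hl.1 (pow_pos hL 2))
            have hl0 : l ≠ 0 := ne_of_gt hl.1
            field_simp
    have : c l ≤ ((b - a) * (mLam l : ℝ) + 2) * l :=
      mul_le_mul_of_nonneg_right hcard1 (le_of_lt hl.1)
    calc c l ≤ ((b - a) * (mLam l : ℝ) + 2) * l := this
      _ = (b - a) * ((mLam l : ℝ) * l) + 2 * l := by ring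
      _ ≤ (b - a) / (Real.log (1 / l)) ^ 2 + 2 * l := by
          have := mul_le_mul_of_nonneg_left hml (le_of_lt (sub_pos.2 hab))
          rw [div_eq_mul_one_div]
          linarith
  have hctend : Tendsto c (nhdsWithin 0 (Set.Ioo 0 1)) (nhds 0) := by
    have hg : Tendsto (fun l => (b - a) / (Real.log (1 / l)) ^ 2 + 2 * l)
        (nhdsWithin 0 (Set.Ioo 0 1)) (nhds 0) := by
      have h1 : Tendsto (fun l : ℝ => 1 / l) (nhdsWithin 0 (Set.Ioo 0 1)) atTop := by
        simp only [one_div]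
        exact tendsto_inv_nhdsGT_zero.mono_left
          (nhdsWithin_mono 0 Set.Ioo_subset_Ioi_self)
      have h2 : Tendsto (fun l => (Real.log (1 / l)) ^ 2)
          (nhdsWithin 0 (Set.Ioo 0 1)) atTop :=
        (tendsto_pow_atTop two_ne_zero).comp (Real.tendsto_log_atTop.comp h1)
      have h3 : Tendsto (fun l => (b - a) / (Real.log (1 / l)) ^ 2)
          (nhdsWithin 0 (Set.Ioo 0 1)) (nhds 0) :=
        tendsto_const_nhds.div_atTop h2
      have h4 : Tendsto (fun l : ℝ => 2 * l) (nhdsWithin 0 (Set.Ioo 0 1)) (nhds 0) := by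
        have : Tendsto (fun l : ℝ => 2 * l) (nhds 0) (nhds 0) := by
          simpa using (continuous_mul_left (2:ℝ)).tendsto (0:ℝ)
        exact this.mono_left nhdsWithin_le_nhds
      simpa using h3.add h4
    apply squeeze_zero'
    · filter_upwards [self_mem_nhdsWithin] with l hl
      exact mul_nonneg (Nat.cast_nonneg _) (le_of_lt hl.1)
    · filter_upwards [self_mem_nhdsWithin] with l hl
      exact hcard l hl
    · exact hg
  -- sandwich of probabilities
  apply tendsto_of_tendsto_of_tendsto_of_le_of_le'
      (g := fun l => ENNReal.ofReal (1 - c l)) (h := fun _ => (1:ENNReal))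
  · have : Tendsto (fun l => 1 - c l) (nhdsWithin 0 (Set.Ioo 0 1)) (nhds 1) := by
      simpa using (tendsto_const_nhds (x := (1:ℝ))).sub hctend
    have := (ENNReal.continuous_ofReal.tendsto 1).comp this
    rwa [ENNReal.ofReal_one] at this
  · exact tendsto_const_nhds
  · -- lower bound eventually
    filter_upwards [self_mem_nhdsWithin] with l hl
    set s : ℝ := t * Real.log (1 / l) with hs
    have hL := hLpos l hl
    have hs0 : 0 ≤ s := mul_nonneg (by linarith) (le_of_lt hL)
    set A : Set Ω := {ω | ∀ i : ℤ, ⌊a * (mLam l : ℝ)⌋ ≤ i → i ≤ ⌊b * (mLam l : ℝ)⌋ →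
        X i ω ≤ s} with hA
    have hcompl : Aᶜ ⊆ ⋃ i ∈ S l, {ω | s < X i ω} := by
      intro ω hω
      simp only [hA, Set.mem_compl_iff, Set.mem_setOf_eq, not_forall] at hω
      obtain ⟨i, hi1, hi2, hi3⟩ := hω
      exact Set.mem_biUnion (Finset.mem_Icc.2 ⟨hi1, hi2⟩)
        (Set.mem_setOf_eq ▸ lt_of_not_ge hi3)
    have hbound : μ Aᶜ ≤ ENNReal.ofReal (c l) := by
      calc μ Aᶜ ≤ μ (⋃ i ∈ S l, {ω | s < X i ω}) := measure_mono hcompl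
        _ ≤ ∑ i ∈ S l, μ {ω | s < X i ω} := measure_biUnion_finset_le _ _
        _ = ∑ i ∈ S l, ENNReal.ofReal (Real.exp (-s)) := by
            exact Finset.sum_congr rfl fun i _ => hexp i s hs0
        _ = ((S l).card : ENNReal) * ENNReal.ofReal (Real.exp (-s)) := by
            rw [Finset.sum_const, nsmul_eq_mul]
        _ ≤ ((S l).card : ENNReal) * ENNReal.ofReal l := by
            apply mul_le_mul_right
            apply ENNReal.ofReal_le_ofReal
            have h1 : -s ≤ Real.log l := by
              have h2 : Real.log (1 / l) ≤ s := by
                nlinarith [le_of_lt hL]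
              rw [one_div, Real.log_inv] at h2
              linarith
            calc Real.exp (-s) ≤ Real.exp (Real.log l) := Real.exp_le_exp.2 h1
              _ = l := Real.exp_log hl.1
        _ = ENNReal.ofReal (c l) := by
            rw [hc, ENNReal.ofReal_mul (Nat.cast_nonneg _), ENNReal.ofReal_natCast]
    have huniv : (1:ENNReal) ≤ μ A + μ Aᶜ := by
      have : μ (A ∪ Aᶜ) ≤ μ A + μ Aᶜ := measure_union_le _ _
      simpa [Set.union_compl_self] using this
    have key : (1:ENNReal) - ENNReal.ofReal (c l) ≤ μ A := by
      rw [tsub_le_iff_right]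
      exact le_trans huniv (add_le_add_right hbound _)
    calc ENNReal.ofReal (1 - c l)
        ≤ ENNReal.ofReal 1 - ENNReal.ofReal (c l) := by
          rw [ENNReal.ofReal_sub _ (mul_nonneg (Nat.cast_nonneg _) (le_of_lt hl.1))]
      _ = 1 - ENNReal.ofReal (c l) := by rw [ENNReal.ofReal_one]
      _ ≤ μ A := key
  · filter_upwards with l
    exact prob_le_one
end

section
/- Fix z0 ∈ [0,1], α ∈ (0,1), t > z0 + α, and real numbers a > 0 and b > 0. For λ ∈ (0,1) set m_λ^α = ⌊α/(λ^(α+(1−α)·z0)·log(1/λ))⌋. Then, as λ → 0⁺ with λ ∈ (0,1), the probability ℙ( X i ≤ t·log(1/λ) for every integer i with −⌊a·m_λ^α⌋ ≤ i ≤ ⌊b·m_λ^α⌋ ) tends to 1. -/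
open MeasureTheory ProbabilityTheory Filter
open scoped ENNReal

/-- The slow-regime space scale `m_λ^α = ⌊α/(λ^(α+(1−α)·z0)·log(1/λ))⌋`. -/
noncomputable def mLamAlpha (z0 α l : ℝ) : ℤ :=
  ⌊α / (l ^ (α + (1 - α) * z0) * Real.log (1 / l))⌋

theorem statement7
    {Ω : Type*} [MeasurableSpace Ω] (μ : Measure Ω) [IsProbabilityMeasure μ]
    (X : ℤ → Ω → ℝ) (hmeas : ∀ i, Measurable (X i))
    (hindep : iIndepFun X μ)
    (hexp : ∀ (i : ℤ) (s : ℝ), 0 ≤ s → μ {ω | s < X i ω} = ENNReal.ofReal (Real.exp (-s)))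
    (z0 α t a b : ℝ) (hz0 : 0 ≤ z0) (hz1 : z0 ≤ 1) (hα0 : 0 < α) (hα1 : α < 1)
    (ht : z0 + α < t) (ha : 0 < a) (hb : 0 < b) :
    Tendsto
      (fun l : ℝ =>
        μ {ω | ∀ i : ℤ,
            -⌊a * (mLamAlpha z0 α l : ℝ)⌋ ≤ i → i ≤ ⌊b * (mLamAlpha z0 α l : ℝ)⌋ →
            X i ω ≤ t * Real.log (1 / l)})
      (nhdsWithin 0 (Set.Ioo 0 1)) (nhds 1) := by
  set β : ℝ := α + (1 - α) * z0 with hβdef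
  have hβpos : 0 < β := by nlinarith
  have hβlt : β < t := by nlinarith
  have htpos : 0 < t := lt_of_le_of_lt (by positivity) hβlt
  set F := nhdsWithin (0:ℝ) (Set.Ioo 0 1) with hF
  -- the "bad" event
  set T : ℝ → Set Ω := fun l =>
    ⋃ i ∈ Finset.Icc (-⌊a * (mLamAlpha z0 α l : ℝ)⌋) ⌊b * (mLamAlpha z0 α l : ℝ)⌋,
      {ω | t * Real.log (1 / l) < X i ω} with hT
  have hTmeas : ∀ l, MeasurableSet (T l) := by
    intro l
    refine Set.Finite.measurableSet_biUnion (Finset.finite_toSet _) ?_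
    intro i _
    exact measurableSet_lt measurable_const (hmeas i)
  have hScompl : ∀ l : ℝ,
      {ω | ∀ i : ℤ,
          -⌊a * (mLamAlpha z0 α l : ℝ)⌋ ≤ i → i ≤ ⌊b * (mLamAlpha z0 α l : ℝ)⌋ →
          X i ω ≤ t * Real.log (1 / l)} = (T l)ᶜ := by
    intro l
    ext ω
    simp [hT, Finset.mem_Icc, not_lt, and_imp]
  -- the bound function
  set g : ℝ → ℝ := fun l =>
    ((a + b) * (α / (l ^ β * Real.log (1 / l))) + 1) * l ^ t with hg
  -- μ (T l) ≤ ofReal (g l) on (0,1)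
  have hbound : ∀ l ∈ Set.Ioo (0:ℝ) 1, μ (T l) ≤ ENNReal.ofReal (g l) := by
    rintro l ⟨hl0, hl1⟩
    have hlog : 0 < Real.log (1 / l) := Real.log_pos (one_lt_one_div hl0 hl1)
    have hs : 0 ≤ t * Real.log (1 / l) := by positivity
    set mR : ℝ := α / (l ^ β * Real.log (1 / l)) with hmR
    have hmRpos : 0 < mR := by positivity
    have hmfloor : (mLamAlpha z0 α l : ℝ) ≤ mR := Int.floor_le _
    have hmnn : (0:ℝ) ≤ (mLamAlpha z0 α l : ℝ) := by
      have : (0:ℤ) ≤ mLamAlpha z0 α l := Int.floor_nonneg.2 hmRpos.le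
      exact_mod_cast this
    set lo : ℤ := -⌊a * (mLamAlpha z0 α l : ℝ)⌋ with hlo
    set hi : ℤ := ⌊b * (mLamAlpha z0 α l : ℝ)⌋ with hhi
    have hexp_eq : Real.exp (-(t * Real.log (1 / l))) = l ^ t := by
      rw [Real.rpow_def_of_pos hl0, one_div, Real.log_inv]
      congr 1
      ring
    have h1 : μ (T l) ≤ ∑ i ∈ Finset.Icc lo hi, μ {ω | t * Real.log (1 / l) < X i ω} :=
      measure_biUnion_finset_le _ _
    have h2 : ∑ i ∈ Finset.Icc lo hi, μ {ω | t * Real.log (1 / l) < X i ω}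
        = ((Finset.Icc lo hi).card : ℝ≥0∞) * ENNReal.ofReal (l ^ t) := by
      rw [Finset.sum_congr rfl (fun i _ => by rw [hexp i _ hs, hexp_eq])]
      simp [Finset.sum_const, nsmul_eq_mul]
    have hcard : ((Finset.Icc lo hi).card : ℝ) ≤ (a + b) * mR + 1 := by
      have hloZ : (0:ℤ) ≤ ⌊a * (mLamAlpha z0 α l : ℝ)⌋ := Int.floor_nonneg.2 (by positivity)
      have hhiZ : (0:ℤ) ≤ hi := Int.floor_nonneg.2 (by positivity)
      have hcardeq : (Finset.Icc lo hi).card = (hi + 1 - lo).toNat := Int.card_Icc lo hi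
      have hnn : (0:ℤ) ≤ hi + 1 - lo := by omega
      have : ((Finset.Icc lo hi).card : ℝ) = ((hi : ℝ) + 1 - (lo : ℝ)) := by
        rw [hcardeq, ← Int.cast_natCast, Int.toNat_of_nonneg hnn]
        push_cast
        ring
      rw [this, hlo, hhi]
      push_cast
      have hA : (⌊a * (mLamAlpha z0 α l : ℝ)⌋ : ℝ) ≤ a * mR :=
        le_trans (Int.floor_le _) (by nlinarith)
      have hB : (⌊b * (mLamAlpha z0 α l : ℝ)⌋ : ℝ) ≤ b * mR :=
        le_trans (Int.floor_le _) (by nlinarith)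
      nlinarith
    calc μ (T l) ≤ ((Finset.Icc lo hi).card : ℝ≥0∞) * ENNReal.ofReal (l ^ t) := h1.trans h2.le
      _ = ENNReal.ofReal (((Finset.Icc lo hi).card : ℝ) * l ^ t) := by
          rw [ENNReal.ofReal_mul (by positivity)]
          simp
      _ ≤ ENNReal.ofReal (g l) := by
          apply ENNReal.ofReal_le_ofReal
          have hlt : (0:ℝ) ≤ l ^ t := by positivity
          exact mul_le_mul_of_nonneg_right hcard hlt
  -- g tends to 0
  have hgto : Tendsto g F (nhds 0) := by
    have hrpow : ∀ c : ℝ, 0 < c → Tendsto (fun l : ℝ => l ^ c) F (nhds 0) := by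
      intro c hc
      have h := (Real.continuousAt_rpow_const 0 c (Or.inr hc.le)).tendsto
      rw [Real.zero_rpow hc.ne'] at h
      exact h.mono_left nhdsWithin_le_nhds
    have hloginv : Tendsto (fun l : ℝ => (Real.log (1 / l))⁻¹) F (nhds 0) := by
      have h1 : Tendsto Real.log (nhdsWithin (0:ℝ) (Set.Ioi 0)) atBot :=
        Real.tendsto_log_nhdsGT_zero
      have h2 : Tendsto (fun l : ℝ => Real.log (1 / l)) (nhdsWithin (0:ℝ) (Set.Ioi 0)) atTop := by
        have h3 : Tendsto (fun l : ℝ => -Real.log l) (nhdsWithin (0:ℝ) (Set.Ioi 0)) atTop :=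
          tendsto_neg_atBot_atTop.comp h1
        refine h3.congr fun l => ?_
        rw [one_div, Real.log_inv]
      exact (h2.mono_left (nhdsWithin_mono _ Set.Ioo_subset_Ioi_self)).inv_tendsto_atTop
    have hIoo : ∀ᶠ l in F, l ∈ Set.Ioo (0:ℝ) 1 := self_mem_nhdsWithin
    have hEq : ∀ᶠ l in F, g l
        = (a + b) * α * (l ^ (t - β) * (Real.log (1 / l))⁻¹) + l ^ t := by
      filter_upwards [hIoo] with l hl
      obtain ⟨hl0, hl1⟩ := hl
      have hlog : 0 < Real.log (1 / l) := Real.log_pos (one_lt_one_div hl0 hl1)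
      have hlβ : (0:ℝ) < l ^ β := by positivity
      rw [hg]
      have hsub : l ^ (t - β) = l ^ t / l ^ β := Real.rpow_sub hl0 t β
      field_simp [hsub]
      rw [hsub]
      field_simp
    have hmain : Tendsto
        (fun l : ℝ => (a + b) * α * (l ^ (t - β) * (Real.log (1 / l))⁻¹) + l ^ t) F (nhds 0) := by
      have h1 := ((hrpow (t - β) (by linarith)).mul hloginv).const_mul ((a + b) * α)
      have h2 := hrpow t htpos
      have := h1.add h2
      simpa using this
    exact hmain.congr' (hEq.mono fun l h => h.symm)
  -- μ (T l) tends to 0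
  have hT0 : Tendsto (fun l => μ (T l)) F (nhds 0) := by
    have hup : Tendsto (fun l => ENNReal.ofReal (g l)) F (nhds 0) := by
      have := ENNReal.tendsto_ofReal hgto
      simpa using this
    refine tendsto_of_tendsto_of_tendsto_of_le_of_le' tendsto_const_nhds hup ?_ ?_
    · exact Eventually.of_forall fun l => zero_le
    · filter_upwards [self_mem_nhdsWithin] with l hl using hbound l hl
  -- conclude
  have hfinal : Tendsto (fun l => 1 - μ (T l)) F (nhds 1) := by
    have hc : Continuous (fun x : ℝ≥0∞ => 1 - x) := ENNReal.continuous_sub_left ENNReal.one_ne_top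
    have := (hc.tendsto 0).comp hT0
    simpa [Function.comp_def] using this
  refine hfinal.congr fun l => ?_
  rw [hScompl l, measure_compl (hTmeas l) (measure_ne_top μ _), measure_univ]
end

section
/- Fix p ∈ (0,∞), T > 0, A > 0, a real t with 0 < t < 1, and real numbers a < b. Let (λ_n) ⊂ (0,1) and (π_n) ⊂ [1,∞) satisfy λ_n → 0 and n_{λ_n}/(a_{λ_n}·π_n) → p. Set 𝔳_n = max(T/p, 2A)·|n_{λ_n}/(a_{λ_n}·π_n) − p| and k_n = ⌊a_{λ_n}·π_n·(ε_{λ_n} + 𝔳_n)⌋. Then ℙ( X i ≤ t·a_{λ_n} for every integer i with ⌊a·k_n⌋ ≤ i ≤ ⌊b·k_n⌋ ) tends to 0 as n → ∞. -/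
open MeasureTheory ProbabilityTheory Filter

/-- The rescaled time scale `a_λ = log(1/λ)`. -/
noncomputable def aLam (l : ℝ) : ℝ := Real.log (1 / l)

/-- The macroscopic space scale `n_λ = ⌊1/(λ·log(1/λ))⌋`. -/
noncomputable def nLam (l : ℝ) : ℤ := ⌊1 / (l * Real.log (1 / l))⌋

/-- `ε_λ = 1/(log(1/λ))³`. -/
noncomputable def epsLam (l : ℝ) : ℝ := 1 / (Real.log (1 / l)) ^ 3

/-- `𝔳_{λ,π} = max(T/p, 2A)·|n_λ/(a_λ·π) − p|`. -/
noncomputable def vFrak (p T A l π : ℝ) : ℝ :=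
  max (T / p) (2 * A) * |(nLam l : ℝ) / (aLam l * π) - p|

/-- The auxiliary scale `k_{λ,π} = ⌊a_λ·π·(ε_λ + 𝔳_{λ,π})⌋`. -/
noncomputable def kLam (p T A l π : ℝ) : ℤ :=
  ⌊aLam l * π * (epsLam l + vFrak p T A l π)⌋

/-- number of sites in the window -/
noncomputable def mAux (p T A a b l pi : ℝ) : ℕ :=
  (Finset.Icc ⌊a * (kLam p T A l pi : ℝ)⌋ ⌊b * (kLam p T A l pi : ℝ)⌋).card

/-- lower bound function for `q·m` -/
noncomputable def fAux (p t a b : ℝ) (y : ℝ) : ℝ :=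
  (b - a) / (2*p) * (Real.exp ((1-t)*y) / y^4) - ((b-a)/(2*p) + (b-a))

lemma fAux_tendsto (p t a b : ℝ) (hp : 0 < p) (ht1 : t < 1) (hab : a < b) :
    Tendsto (fAux p t a b) atTop atTop := by
  have hs : (0:ℝ) < 1 - t := by linarith
  have h1 : Tendsto (fun y : ℝ => (1-t) * y) atTop atTop := tendsto_id.const_mul_atTop hs
  have h2 : Tendsto (fun y : ℝ => Real.exp ((1-t)*y) / ((1-t)*y)^4) atTop atTop :=
    (Real.tendsto_exp_div_pow_atTop 4).comp h1
  have h3 : Tendsto (fun y : ℝ => (1-t)^4 * (Real.exp ((1-t)*y) / ((1-t)*y)^4)) atTop atTop :=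
    h2.const_mul_atTop (pow_pos hs 4)
  have h4 : Tendsto (fun y : ℝ => Real.exp ((1-t)*y) / y^4) atTop atTop := by
    refine h3.congr' ?_
    filter_upwards [eventually_gt_atTop (0:ℝ)] with y hy
    have hy4 : y^4 ≠ 0 := by positivity
    field_simp
  have hba : (0:ℝ) < (b - a)/(2*p) := by
    have : (0:ℝ) < b - a := by linarith
    positivity
  exact (tendsto_atTop_add_const_right _ (-((b-a)/(2*p)+(b-a)))
    (h4.const_mul_atTop hba)).congr (fun y => by rw [fAux]; ring)

lemma qm_lower (p T A t a b l pi : ℝ) (hp : 0 < p) (hT : 0 < T)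
    (ht0 : 0 < t) (hab : a < b) (hl0 : 0 < l) (hpi : 1 ≤ pi)
    (hy1 : 1 ≤ aLam l)
    (hr : (nLam l : ℝ) / (aLam l * pi) < 2*p) :
    fAux p t a b (aLam l) ≤ Real.exp (-(t * aLam l)) * (mAux p T A a b l pi : ℝ) := by
  set y := aLam l with hydef
  have hy0 : (0:ℝ) < y := by linarith
  have hyπ : (0:ℝ) < y * pi := by nlinarith
  set q := Real.exp (-(t * y)) with hqdef
  have hq0 : (0:ℝ) < q := Real.exp_pos _
  have hq1 : q ≤ 1 := Real.exp_le_one_iff.2 (by nlinarith)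
  have hey : Real.exp y = 1 / l := by
    rw [hydef, aLam]; exact Real.exp_log (by positivity)
  have hlog : Real.log (1 / l) = y := rfl
  -- lower bound on nLam
  have hNlb : Real.exp y / y - 1 < ((nLam l : ℤ) : ℝ) := by
    have heq : (1:ℝ) / (l * Real.log (1 / l)) = Real.exp y / y := by
      rw [hey, hlog]; field_simp
    calc Real.exp y / y - 1 < ⌊Real.exp y / y⌋ := Int.sub_one_lt_floor _
      _ = ((nLam l : ℤ) : ℝ) := by rw [nLam, heq]
  -- upper bound on nLam
  have hNub : ((nLam l : ℤ) : ℝ) < 2*p*(y*pi) := by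
    rw [div_lt_iff₀ hyπ] at hr; linarith
  -- k bounds
  have hv : (0:ℝ) ≤ vFrak p T A l pi :=
    mul_nonneg (le_trans (div_pos hT hp).le (le_max_left _ _)) (abs_nonneg _)
  have heps : epsLam l = 1 / y^3 := rfl
  set kk := kLam p T A l pi with hkkdef
  have hkraw : (kk : ℝ) ≥ y * pi * (epsLam l + vFrak p T A l pi) - 1 :=
    (Int.sub_one_lt_floor _).le
  have hkklb : ((nLam l : ℤ) : ℝ) / (2*p) / y^3 - 1 ≤ (kk : ℝ) := by
    have hN2p : ((nLam l : ℤ) : ℝ) / (2*p) ≤ y * pi := by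
      rw [div_le_iff₀ (by positivity)]; nlinarith
    have hy3 : (0:ℝ) < y^3 := by positivity
    have h1 : ((nLam l : ℤ) : ℝ) / (2*p) / y^3 ≤ (y * pi) / y^3 := by gcongr
    have h2 : (y * pi) / y^3 = y * pi * (1/y^3) := by ring
    have h3 : y * pi * (1/y^3) ≤ y * pi * (epsLam l + vFrak p T A l pi) := by
      rw [heps]; nlinarith
    linarith
  have hkk0 : (0:ℝ) ≤ (kk : ℝ) := by
    have hev : (0:ℝ) ≤ epsLam l + vFrak p T A l pi := by
      have h3 : (0:ℝ) < 1/y^3 := by positivity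
      rw [heps]; linarith
    have h0 : (0:ℝ) ≤ y * pi * (epsLam l + vFrak p T A l pi) :=
      mul_nonneg (mul_nonneg hy0.le (by linarith)) hev
    have h1 : (0:ℤ) ≤ kk := by
      rw [hkkdef, kLam]
      exact Int.floor_nonneg.2 h0
    exact_mod_cast h1
  -- bound on m
  have hmlb : (b - a) * ((kk : ℤ) : ℝ) ≤ ((mAux p T A a b l pi : ℕ) : ℝ) := by
    have hcard : (mAux p T A a b l pi : ℤ)
        = (⌊b * (kk:ℝ)⌋ + 1 - ⌊a * (kk:ℝ)⌋).toNat := by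
      rw [mAux, Int.card_Icc]
    have h1 : ((⌊b * (kk:ℝ)⌋ + 1 - ⌊a * (kk:ℝ)⌋ : ℤ) : ℝ) ≤ ((mAux p T A a b l pi : ℕ) : ℝ) := by
      have h2 := Int.self_le_toNat (⌊b * (kk:ℝ)⌋ + 1 - ⌊a * (kk:ℝ)⌋)
      have h3 : ((⌊b * (kk:ℝ)⌋ + 1 - ⌊a * (kk:ℝ)⌋ : ℤ) : ℝ)
          ≤ (((⌊b * (kk:ℝ)⌋ + 1 - ⌊a * (kk:ℝ)⌋).toNat : ℤ) : ℝ) := by exact_mod_cast h2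
      rw [← hcard] at h3
      exact_mod_cast h3
    have hlo' : ((⌊a * (kk:ℝ)⌋ : ℤ) : ℝ) ≤ a * (kk:ℝ) := Int.floor_le _
    have hhi' : b * (kk:ℝ) - 1 < ((⌊b * (kk:ℝ)⌋ : ℤ) : ℝ) := Int.sub_one_lt_floor _
    push_cast at h1
    nlinarith
  -- the chain
  have hXk : (Real.exp y / y - 1) / (2*p) / y^3 - 1 ≤ (kk : ℝ) := by
    have h1 : (Real.exp y / y - 1) / (2*p) / y^3
        ≤ ((nLam l : ℤ) : ℝ) / (2*p) / y^3 := by gcongr <;> positivity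
    linarith
  have hE12 : q * Real.exp y = Real.exp ((1-t)*y) := by
    rw [hqdef, ← Real.exp_add]; ring_nf
  have hiden : q * ((b-a) * ((Real.exp y / y - 1) / (2*p) / y^3 - 1))
      = (b-a)/(2*p) * (Real.exp ((1-t)*y) / y^4)
        - ((b-a) * (q/(2*p*y^3)) + (b-a) * q) := by
    rw [← hE12]
    field_simp
    ring
  have hy3 : (1:ℝ) ≤ y^3 := one_le_pow₀ hy1
  have hs1 : (b-a) * (q/(2*p*y^3)) ≤ (b-a)/(2*p) := by
    have h1 : q/(2*p*y^3) ≤ 1/(2*p) := by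
      calc q/(2*p*y^3) ≤ 1/(2*p*y^3) := by gcongr
        _ ≤ 1/(2*p) := one_div_le_one_div_of_le (by positivity)
            (le_mul_of_one_le_right (by positivity) hy3)
    have h2 : (b-a) * (q/(2*p*y^3)) ≤ (b-a) * (1/(2*p)) := by
      apply mul_le_mul_of_nonneg_left h1 (by linarith)
    calc (b-a) * (q/(2*p*y^3)) ≤ (b-a) * (1/(2*p)) := h2
      _ = (b-a)/(2*p) := by ring
  have hs2 : (b-a) * q ≤ (b-a) := mul_le_of_le_one_right (by linarith) hq1
  have hF : fAux p t a b y ≤ q * ((b-a) * ((Real.exp y / y - 1) / (2*p) / y^3 - 1)) := by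
    rw [hiden, fAux]
    linarith
  calc fAux p t a b y ≤ q * ((b-a) * ((Real.exp y / y - 1) / (2*p) / y^3 - 1)) := hF
    _ ≤ q * ((b-a) * (kk : ℝ)) := by
        apply mul_le_mul_of_nonneg_left _ hq0.le
        exact mul_le_mul_of_nonneg_left hXk (by linarith)
    _ ≤ q * ((mAux p T A a b l pi : ℕ) : ℝ) :=
        mul_le_mul_of_nonneg_left hmlb hq0.le

theorem statement8
    {Ω : Type*} [MeasurableSpace Ω] (μ : Measure Ω) [IsProbabilityMeasure μ]
    (X : ℤ → Ω → ℝ) (hmeas : ∀ i, Measurable (X i))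
    (hindep : iIndepFun X μ)
    (hexp : ∀ (i : ℤ) (s : ℝ), 0 ≤ s → μ {ω | s < X i ω} = ENNReal.ofReal (Real.exp (-s)))
    (p T A t a b : ℝ) (hp : 0 < p) (hT : 0 < T) (hA : 0 < A)
    (ht0 : 0 < t) (ht1 : t < 1) (hab : a < b)
    (lam π : ℕ → ℝ)
    (hlam : ∀ n, lam n ∈ Set.Ioo (0 : ℝ) 1) (hπ : ∀ n, 1 ≤ π n)
    (hlam0 : Tendsto lam atTop (nhds 0))
    (hreg : Tendsto (fun n => (nLam (lam n) : ℝ) / (aLam (lam n) * π n)) atTop (nhds p)) :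
    Tendsto
      (fun n : ℕ =>
        μ {ω | ∀ i : ℤ,
            ⌊a * (kLam p T A (lam n) (π n) : ℝ)⌋ ≤ i →
            i ≤ ⌊b * (kLam p T A (lam n) (π n) : ℝ)⌋ →
            X i ω ≤ t * aLam (lam n)})
      atTop (nhds 0) := by
  have ha_pos : ∀ n, 0 < aLam (lam n) := fun n =>
    Real.log_pos (one_lt_one_div (hlam n).1 (hlam n).2)
  have ha_top : Tendsto (fun n => aLam (lam n)) atTop atTop := by
    have h1 : Tendsto (fun n => (lam n)⁻¹) atTop atTop := by
      refine Filter.Tendsto.inv_tendsto_nhdsGT_zero ?_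
      rw [tendsto_nhdsWithin_iff]
      exact ⟨hlam0, Eventually.of_forall fun n => (hlam n).1⟩
    have h2 : Tendsto (fun n => Real.log (lam n)⁻¹) atTop atTop :=
      Real.tendsto_log_atTop.comp h1
    refine h2.congr fun n => ?_
    simp [aLam, one_div]
  set q : ℕ → ℝ := fun n => Real.exp (-(t * aLam (lam n))) with hq
  have hq_pos : ∀ n, 0 < q n := fun n => Real.exp_pos _
  have hq_le1 : ∀ n, q n ≤ 1 := fun n =>
    Real.exp_le_one_iff.2 (by nlinarith [ha_pos n, (ha_pos n).le])
  set m : ℕ → ℕ := fun n => mAux p T A a b (lam n) (π n) with hm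
  -- measure of a single event
  have hsingle : ∀ n (i : ℤ), μ {ω | X i ω ≤ t * aLam (lam n)} = ENNReal.ofReal (1 - q n) := by
    intro n i
    have hc : (0:ℝ) ≤ t * aLam (lam n) := le_of_lt (mul_pos ht0 (ha_pos n))
    have h1 : {ω | X i ω ≤ t * aLam (lam n)} = {ω | t * aLam (lam n) < X i ω}ᶜ := by
      ext ω; simp [not_lt]
    have h2 : MeasurableSet {ω | t * aLam (lam n) < X i ω} := by
      have : {ω | t * aLam (lam n) < X i ω} = X i ⁻¹' Set.Ioi (t * aLam (lam n)) := rfl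
      rw [this]; exact (hmeas i) measurableSet_Ioi
    rw [h1, prob_compl_eq_one_sub h2, hexp i _ hc]
    rw [ENNReal.ofReal_sub 1 (Real.exp_nonneg _), ENNReal.ofReal_one]
  -- measure of the full event
  have hE : ∀ n, μ {ω | ∀ i : ℤ,
        ⌊a * (kLam p T A (lam n) (π n) : ℝ)⌋ ≤ i →
        i ≤ ⌊b * (kLam p T A (lam n) (π n) : ℝ)⌋ →
        X i ω ≤ t * aLam (lam n)}
      = ENNReal.ofReal ((1 - q n) ^ m n) := by
    intro n
    have hset : {ω | ∀ i : ℤ,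
          ⌊a * (kLam p T A (lam n) (π n) : ℝ)⌋ ≤ i →
          i ≤ ⌊b * (kLam p T A (lam n) (π n) : ℝ)⌋ →
          X i ω ≤ t * aLam (lam n)}
        = ⋂ i ∈ Finset.Icc ⌊a * (kLam p T A (lam n) (π n) : ℝ)⌋
            ⌊b * (kLam p T A (lam n) (π n) : ℝ)⌋, {ω | X i ω ≤ t * aLam (lam n)} := by
      ext ω
      simp only [Set.mem_setOf_eq, Set.mem_iInter, Finset.mem_Icc]
      exact ⟨fun h i hi' => h i hi'.1 hi'.2, fun h i h1 h2 => h i ⟨h1, h2⟩⟩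
    have hbi := hindep.meas_biInter
      (S := Finset.Icc ⌊a * (kLam p T A (lam n) (π n) : ℝ)⌋ ⌊b * (kLam p T A (lam n) (π n) : ℝ)⌋)
      (s := fun i => {ω | X i ω ≤ t * aLam (lam n)})
      (fun i _ => ⟨Set.Iic (t * aLam (lam n)), measurableSet_Iic, rfl⟩)
    rw [hset, hbi, Finset.prod_congr rfl (fun i _ => hsingle n i), Finset.prod_const,
      ← ENNReal.ofReal_pow (by linarith [hq_le1 n])]
    rfl
  -- upper bound on the measure
  have hbound : ∀ n, μ {ω | ∀ i : ℤ,
        ⌊a * (kLam p T A (lam n) (π n) : ℝ)⌋ ≤ i →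
        i ≤ ⌊b * (kLam p T A (lam n) (π n) : ℝ)⌋ →
        X i ω ≤ t * aLam (lam n)}
      ≤ ENNReal.ofReal (Real.exp (-(q n * m n))) := by
    intro n
    rw [hE n]
    apply ENNReal.ofReal_le_ofReal
    calc (1 - q n) ^ m n ≤ Real.exp (-(q n)) ^ m n :=
          pow_le_pow_left₀ (by linarith [hq_le1 n])
            (by linarith [Real.add_one_le_exp (-(q n))]) _
      _ = Real.exp ((m n : ℝ) * (-(q n))) := (Real.exp_nat_mul _ _).symm
      _ = Real.exp (-(q n * m n)) := by ring_nf
  -- q n * m n tends to infinity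
  have hqm : Tendsto (fun n => q n * m n) atTop atTop := by
    refine tendsto_atTop_mono' atTop ?_ ((fAux_tendsto p t a b hp ht1 hab).comp ha_top)
    filter_upwards [ha_top.eventually_ge_atTop 1,
      hreg.eventually_lt_const (show p < 2*p by linarith)] with n hy1 hr2p
    exact qm_lower p T A t a b (lam n) (π n) hp hT ht0 hab (hlam n).1 (hπ n) hy1 hr2p
  -- conclude by squeezing
  have hupper : Tendsto (fun n => ENNReal.ofReal (Real.exp (-(q n * m n)))) atTop (nhds 0) := by
    have h1 : Tendsto (fun n => Real.exp (-(q n * m n))) atTop (nhds 0) :=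
      Real.tendsto_exp_atBot.comp (tendsto_neg_atBot_iff.2 hqm)
    simpa using ENNReal.tendsto_ofReal h1
  exact tendsto_of_tendsto_of_tendsto_of_le_of_le tendsto_const_nhds hupper
    (fun n => zero_le) (fun n => hbound n)
end

section
/- Fix p ∈ (0,∞), T > 0, A > 0, a real t with t ≥ 1, and real numbers a < b. Let (λ_n) ⊂ (0,1) and (π_n) ⊂ [1,∞) satisfy λ_n → 0 and n_{λ_n}/(a_{λ_n}·π_n) → p. Set 𝔳_n = max(T/p, 2A)·|n_{λ_n}/(a_{λ_n}·π_n) − p| and k_n = ⌊a_{λ_n}·π_n·(ε_{λ_n} + 𝔳_n)⌋. Then ℙ( X i ≤ t·a_{λ_n} for every integer i with ⌊a·k_n⌋ ≤ i ≤ ⌊b·k_n⌋ ) tends to 1 as n → ∞. -/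
open MeasureTheory ProbabilityTheory Filter

theorem statement9
    {Ω : Type*} [MeasurableSpace Ω] (μ : Measure Ω) [IsProbabilityMeasure μ]
    (X : ℤ → Ω → ℝ) (hmeas : ∀ i, Measurable (X i))
    (hindep : iIndepFun X μ)
    (hexp : ∀ (i : ℤ) (s : ℝ), 0 ≤ s → μ {ω | s < X i ω} = ENNReal.ofReal (Real.exp (-s)))
    (p T A t a b : ℝ) (hp : 0 < p) (hT : 0 < T) (hA : 0 < A)
    (ht : 1 ≤ t) (hab : a < b)
    (lam π : ℕ → ℝ)
    (hlam : ∀ n, lam n ∈ Set.Ioo (0 : ℝ) 1) (hπ : ∀ n, 1 ≤ π n)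
    (hlam0 : Tendsto lam atTop (nhds 0))
    (hreg : Tendsto (fun n => (nLam (lam n) : ℝ) / (aLam (lam n) * π n)) atTop (nhds p)) :
    Tendsto
      (fun n : ℕ =>
        μ {ω | ∀ i : ℤ,
            ⌊a * (kLam p T A (lam n) (π n) : ℝ)⌋ ≤ i →
            i ≤ ⌊b * (kLam p T A (lam n) (π n) : ℝ)⌋ →
            X i ω ≤ t * aLam (lam n)})
      atTop (nhds 1) := by

  -- Basic positivity facts
  have hl0 : ∀ n, 0 < lam n := fun n => (hlam n).1
  have hl1 : ∀ n, lam n < 1 := fun n => (hlam n).2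
  have hα : ∀ n, 0 < aLam (lam n) := by
    intro n
    have h1 : (1 : ℝ) < 1 / lam n := by
      rw [lt_div_iff₀ (hl0 n)]; linarith [hl1 n]
    exact Real.log_pos h1
  have hε0 : ∀ n, 0 ≤ epsLam (lam n) := by
    intro n
    have := hα n
    unfold aLam at this
    unfold epsLam
    positivity
  have hv0 : ∀ n, 0 ≤ vFrak p T A (lam n) (π n) := by
    intro n
    unfold vFrak
    have h2A : (0:ℝ) ≤ 2 * A := by linarith
    exact mul_nonneg (le_trans h2A (le_max_right _ _)) (abs_nonneg _)
  have hπ0 : ∀ n, 0 < π n := fun n => lt_of_lt_of_le one_pos (hπ n)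
  have hx0 : ∀ n, 0 ≤ aLam (lam n) * π n * (epsLam (lam n) + vFrak p T A (lam n) (π n)) :=
    fun n => mul_nonneg (mul_nonneg (hα n).le (hπ0 n).le) (add_nonneg (hε0 n) (hv0 n))
  have hK0 : ∀ n, (0:ℤ) ≤ kLam p T A (lam n) (π n) := by
    intro n
    exact Int.floor_nonneg.mpr (hx0 n)
  have hK0' : ∀ n, (0:ℝ) ≤ ((kLam p T A (lam n) (π n) : ℤ) : ℝ) := by
    intro n; exact_mod_cast hK0 n
  -- time level
  have hc0 : ∀ n, 0 ≤ t * aLam (lam n) :=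
    fun n => mul_nonneg (le_trans zero_le_one ht) (hα n).le
  -- exp bound: exp(-(t a_λ)) ≤ λ
  have hexpb : ∀ n, Real.exp (-(t * aLam (lam n))) ≤ lam n := by
    intro n
    have h1 : Real.exp (-(t * aLam (lam n))) ≤ Real.exp (-(aLam (lam n))) := by
      apply Real.exp_le_exp.mpr
      have := hα n
      nlinarith
    have h2 : -(aLam (lam n)) = Real.log (lam n) := by
      unfold aLam
      rw [one_div, Real.log_inv, neg_neg]
    rw [h2, Real.exp_log (hl0 n)] at h1
    exact h1
  -- a_λ → ∞
  have haT : Tendsto (fun n => aLam (lam n)) atTop atTop := by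
    have h1 : Tendsto lam atTop (nhdsWithin 0 (Set.Ioi 0)) :=
      tendsto_nhdsWithin_iff.mpr ⟨hlam0, Filter.Eventually.of_forall (fun n => hl0 n)⟩
    have h2 : Tendsto (fun n => Real.log (lam n)) atTop atBot :=
      Real.tendsto_log_nhdsGT_zero.comp h1
    have h3 : Tendsto (fun n => -Real.log (lam n)) atTop atTop :=
      tendsto_neg_atBot_atTop.comp h2
    refine h3.congr (fun n => ?_)
    unfold aLam
    rw [one_div, Real.log_inv]
  -- ε_λ → 0
  have hεT : Tendsto (fun n => epsLam (lam n)) atTop (nhds 0) := by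
    have h1 : Tendsto (fun n => (aLam (lam n)) ^ 3) atTop atTop :=
      (tendsto_pow_atTop (by norm_num)).comp haT
    have h2 := h1.inv_tendsto_atTop
    refine h2.congr (fun n => ?_)
    simp only [Pi.inv_apply]
    unfold epsLam aLam
    exact (one_div _).symm
  -- 𝔳 → 0
  have hvT : Tendsto (fun n => vFrak p T A (lam n) (π n)) atTop (nhds 0) := by
    have h1 : Tendsto (fun n => |(nLam (lam n) : ℝ) / (aLam (lam n) * π n) - p|) atTop
        (nhds 0) := by
      have := (hreg.sub_const p).abs
      simpa using this
    have h2 := h1.const_mul (max (T / p) (2 * A))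
    simpa [vFrak, mul_comm] using h2
  -- λ·K → 0
  have hlKT : Tendsto (fun n => lam n * ((kLam p T A (lam n) (π n) : ℤ) : ℝ)) atTop (nhds 0) := by
    have hg : Tendsto (fun n => (2 / p) * (epsLam (lam n) + vFrak p T A (lam n) (π n)))
        atTop (nhds 0) := by
      have := ((hεT.add hvT).const_mul (2 / p))
      simpa using this
    apply squeeze_zero' (Filter.Eventually.of_forall (fun n =>
      mul_nonneg (hl0 n).le (hK0' n))) _ hg
    -- eventual bound
    have hev1 : ∀ᶠ n in atTop, p / 2 ≤ (nLam (lam n) : ℝ) / (aLam (lam n) * π n) :=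
      hreg.eventually (eventually_ge_nhds (show p/2 < p by linarith))
    have hev2 : ∀ᶠ n in atTop, 1 ≤ aLam (lam n) := haT.eventually_ge_atTop 1
    filter_upwards [hev1, hev2] with n hr ha1
    set r := (nLam (lam n) : ℝ) / (aLam (lam n) * π n) with hrdef
    have hr0 : 0 < r := lt_of_lt_of_le (by linarith) hr
    have hαπ : (0:ℝ) < aLam (lam n) * π n := mul_pos (hα n) (hπ0 n)
    have hn : ((nLam (lam n) : ℤ) : ℝ) = r * (aLam (lam n) * π n) := by
      rw [hrdef]; field_simp
      rw [mul_div_assoc, div_self (hπ0 n).ne', mul_one]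
    -- λ * n_λ ≤ 1/a_λ ≤ 1
    have hnle : ((nLam (lam n) : ℤ) : ℝ) ≤ 1 / (lam n * aLam (lam n)) := by
      unfold nLam aLam
      exact Int.floor_le _
    have hlal : 0 < lam n * aLam (lam n) := mul_pos (hl0 n) (hα n)
    have hln : lam n * ((nLam (lam n) : ℤ) : ℝ) ≤ 1 / aLam (lam n) := by
      rw [le_div_iff₀ (hα n)]
      calc lam n * ((nLam (lam n) : ℤ) : ℝ) * aLam (lam n)
          ≤ lam n * (1 / (lam n * aLam (lam n))) * aLam (lam n) := by
            have := hnle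
            nlinarith [hl0 n, hα n]
        _ = 1 := by field_simp; exact div_self (hl0 n).ne'
    have hln1 : lam n * ((nLam (lam n) : ℤ) : ℝ) ≤ 1 :=
      le_trans hln (by rw [div_le_one (hα n)]; exact ha1)
    -- K ≤ a_λ π (ε+𝔳)
    have hKle : ((kLam p T A (lam n) (π n) : ℤ) : ℝ)
        ≤ aLam (lam n) * π n * (epsLam (lam n) + vFrak p T A (lam n) (π n)) := by
      unfold kLam
      exact Int.floor_le _
    have hsum0 : 0 ≤ epsLam (lam n) + vFrak p T A (lam n) (π n) := add_nonneg (hε0 n) (hv0 n)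
    -- λ (a_λ π) ≤ 2/p
    have hαπle : lam n * (aLam (lam n) * π n) ≤ 2 / p := by
      have h1 : aLam (lam n) * π n = ((nLam (lam n) : ℤ) : ℝ) / r := by
        rw [hn]; field_simp
      rw [h1]
      rw [mul_div_assoc']
      rw [div_le_div_iff₀ hr0 hp]
      have h2 : lam n * ((nLam (lam n) : ℤ) : ℝ) * p ≤ p := by
        nlinarith
      calc lam n * ((nLam (lam n) : ℤ) : ℝ) * p ≤ p := h2
        _ ≤ 2 * r := by linarith
    calc lam n * ((kLam p T A (lam n) (π n) : ℤ) : ℝ)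
        ≤ lam n * (aLam (lam n) * π n * (epsLam (lam n) + vFrak p T A (lam n) (π n))) := by
          exact mul_le_mul_of_nonneg_left hKle (hl0 n).le
      _ = (lam n * (aLam (lam n) * π n)) * (epsLam (lam n) + vFrak p T A (lam n) (π n)) := by
          ring
      _ ≤ (2 / p) * (epsLam (lam n) + vFrak p T A (lam n) (π n)) :=
          mul_le_mul_of_nonneg_right hαπle hsum0
  -- abbreviations
  let E : ℕ → Set Ω := fun n => {ω | ∀ i : ℤ,
      ⌊a * ((kLam p T A (lam n) (π n) : ℤ) : ℝ)⌋ ≤ i →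
      i ≤ ⌊b * ((kLam p T A (lam n) (π n) : ℤ) : ℝ)⌋ →
      X i ω ≤ t * aLam (lam n)}
  show Tendsto (fun n => μ (E n)) atTop (nhds 1)
  set lo : ℕ → ℤ := fun n => ⌊a * ((kLam p T A (lam n) (π n) : ℤ) : ℝ)⌋ with hlodef
  set hi : ℕ → ℤ := fun n => ⌊b * ((kLam p T A (lam n) (π n) : ℤ) : ℝ)⌋ with hhidef
  -- measurability of E n
  have hEmeas : ∀ n, MeasurableSet (E n) := by
    intro n
    have hE : E n = ⋂ i : ℤ, {ω | lo n ≤ i → i ≤ hi n → X i ω ≤ t * aLam (lam n)} := by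
      ext ω; simp [E, lo, hi, Set.mem_iInter]
    rw [hE]
    refine MeasurableSet.iInter (fun i => ?_)
    by_cases h : lo n ≤ i ∧ i ≤ hi n
    · have : {ω | lo n ≤ i → i ≤ hi n → X i ω ≤ t * aLam (lam n)}
          = X i ⁻¹' Set.Iic (t * aLam (lam n)) := by
        ext ω; simp [h.1, h.2]
      rw [this]
      exact (hmeas i) measurableSet_Iic
    · have : {ω | lo n ≤ i → i ≤ hi n → X i ω ≤ t * aLam (lam n)} = Set.univ := by
        ext ω; simp only [Set.mem_setOf_eq, Set.mem_univ, iff_true]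
        intro h1 h2; exact absurd ⟨h1, h2⟩ h
      rw [this]
      exact MeasurableSet.univ
  -- card bound
  have hcard : ∀ n, ((Finset.Icc (lo n) (hi n)).card : ℝ)
      ≤ (b - a) * ((kLam p T A (lam n) (π n) : ℤ) : ℝ) + 2 := by
    intro n
    by_cases h : lo n ≤ hi n
    · rw [Int.card_Icc]
      have hnn : (0:ℤ) ≤ hi n + 1 - lo n := by omega
      have hcast : (((hi n + 1 - lo n).toNat : ℤ) : ℝ) = ((hi n : ℝ) + 1 - (lo n : ℝ)) := by
        rw [Int.toNat_of_nonneg hnn]; push_cast; ring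
      have : (((hi n + 1 - lo n).toNat : ℕ) : ℝ) = ((hi n : ℝ) + 1 - (lo n : ℝ)) := by
        exact_mod_cast hcast
      rw [this]
      have h1 : (hi n : ℝ) ≤ b * ((kLam p T A (lam n) (π n) : ℤ) : ℝ) := Int.floor_le _
      have h2 : a * ((kLam p T A (lam n) (π n) : ℤ) : ℝ) < (lo n : ℝ) + 1 :=
        Int.lt_floor_add_one _
      linarith
    · rw [Finset.Icc_eq_empty h]
      simp only [Finset.card_empty, Nat.cast_zero]
      have := hK0' n
      nlinarith [hab]
    -- complement bound
  have hsub : ∀ n, (E n)ᶜ ⊆ ⋃ i ∈ Finset.Icc (lo n) (hi n), {ω | t * aLam (lam n) < X i ω} := by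
    intro n ω hω
    simp only [E, Set.mem_compl_iff, Set.mem_setOf_eq, not_forall] at hω
    obtain ⟨i, h1, h2, h3⟩ := hω
    refine Set.mem_biUnion (Finset.mem_Icc.mpr ⟨h1, h2⟩) ?_
    exact lt_of_not_ge h3
  have hbound : ∀ n, μ ((E n)ᶜ)
      ≤ ENNReal.ofReal ((b - a) * (lam n * ((kLam p T A (lam n) (π n) : ℤ) : ℝ)) + 2 * lam n) := by
    intro n
    calc μ ((E n)ᶜ) ≤ μ (⋃ i ∈ Finset.Icc (lo n) (hi n), {ω | t * aLam (lam n) < X i ω}) :=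
          measure_mono (hsub n)
      _ ≤ ∑ i ∈ Finset.Icc (lo n) (hi n), μ {ω | t * aLam (lam n) < X i ω} :=
          measure_biUnion_finset_le _ _
      _ = ∑ i ∈ Finset.Icc (lo n) (hi n), ENNReal.ofReal (Real.exp (-(t * aLam (lam n)))) := by
          exact Finset.sum_congr rfl (fun i _ => hexp i _ (hc0 n))
      _ = (Finset.Icc (lo n) (hi n)).card • ENNReal.ofReal (Real.exp (-(t * aLam (lam n)))) :=
          Finset.sum_const _
      _ = ENNReal.ofReal (((Finset.Icc (lo n) (hi n)).card : ℝ)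
            * Real.exp (-(t * aLam (lam n)))) := by
          rw [nsmul_eq_mul, ENNReal.ofReal_mul (Nat.cast_nonneg _), ENNReal.ofReal_natCast]
      _ ≤ ENNReal.ofReal ((b - a) * (lam n * ((kLam p T A (lam n) (π n) : ℤ) : ℝ)) + 2 * lam n) := by
          apply ENNReal.ofReal_le_ofReal
          have hrhs0 : 0 ≤ (b - a) * ((kLam p T A (lam n) (π n) : ℤ) : ℝ) + 2 := by
            nlinarith [hK0' n, hab]
          have := mul_le_mul (hcard n) (hexpb n) (Real.exp_nonneg _) hrhs0
          calc ((Finset.Icc (lo n) (hi n)).card : ℝ) * Real.exp (-(t * aLam (lam n)))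
              ≤ ((b - a) * ((kLam p T A (lam n) (π n) : ℤ) : ℝ) + 2) * lam n := this
            _ = (b - a) * (lam n * ((kLam p T A (lam n) (π n) : ℤ) : ℝ)) + 2 * lam n := by ring
  -- μ (Eᶜ) → 0
  have hBT : Tendsto (fun n => (b - a) * (lam n * ((kLam p T A (lam n) (π n) : ℤ) : ℝ))
      + 2 * lam n) atTop (nhds 0) := by
    have h1 := (hlKT.const_mul (b - a)).add (hlam0.const_mul 2)
    simpa using h1
  have hcT : Tendsto (fun n => μ ((E n)ᶜ)) atTop (nhds 0) := by
    have h2 : Tendsto (fun n => ENNReal.ofReal ((b - a)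
        * (lam n * ((kLam p T A (lam n) (π n) : ℤ) : ℝ)) + 2 * lam n)) atTop (nhds 0) := by
      have := ENNReal.tendsto_ofReal hBT
      simpa using this
    exact tendsto_of_tendsto_of_tendsto_of_le_of_le tendsto_const_nhds h2
      (fun n => zero_le) hbound
  have hfin : ∀ n, μ (E n) = 1 - μ ((E n)ᶜ) := by
    intro n
    conv_lhs => rw [← compl_compl (E n)]
    exact prob_compl_eq_one_sub (hEmeas n).compl
  have hfinal : Tendsto (fun n => (1 : ENNReal) - μ ((E n)ᶜ)) atTop (nhds (1 - 0)) :=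
    ENNReal.Tendsto.sub tendsto_const_nhds hcT (Or.inl ENNReal.one_ne_top)
  rw [tsub_zero] at hfinal
  exact hfinal.congr (fun n => (hfin n).symm)
end

section
/- Fix λ ∈ (0,1), τ > 0 and h > 0, and set s = τ·log(1/λ) and u = h·log(1/λ). Almost surely the quantities r = min{ k ∈ ℤ : k ≥ 1 and X k > s } and l = max{ k ∈ ℤ : k ≤ −1 and X k > s } are well-defined. Then the probability of the event 'either X 0 > s, or (X 0 ≤ s and Z i ≤ u for every integer i with l < i < r)' equals λ^τ + λ^(2τ)·(1 − λ^τ)·(1 − λ^h)/(λ^τ + λ^h − λ^(τ+h))². -/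
open MeasureTheory ProbabilityTheory Filter

namespace Statement10Aux

variable {Ω : Type*} [MeasurableSpace Ω] {μ : Measure Ω} [IsProbabilityMeasure μ]
  {X Z : ℤ → Ω → ℝ}

/-- The index finset for the decomposition event `bSet n m`. -/
noncomputable def bIdx (n m : ℕ) : Finset (ℤ ⊕ ℤ) :=
  ((Finset.Icc (-(m : ℤ) - 1) ((n : ℤ) + 1)).image Sum.inl) ∪
    ((Finset.Icc (-(m : ℤ)) (n : ℤ)).image Sum.inr)

/-- The target sets for the decomposition event `bSet n m`. -/
def bTarget (s u : ℝ) (n m : ℕ) : ℤ ⊕ ℤ → Set ℝ :=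
  Sum.elim (fun k => if k = (n : ℤ) + 1 ∨ k = -(m : ℤ) - 1 then Set.Ioi s else Set.Iic s)
    (fun _ => Set.Iic u)

lemma bTarget_measurable (s u : ℝ) (n m : ℕ) (j : ℤ ⊕ ℤ) :
    MeasurableSet (bTarget s u n m j) := by
  rcases j with k | i
  · simp only [bTarget, Sum.elim_inl]
    split_ifs
    · exact measurableSet_Ioi
    · exact measurableSet_Iic
  · exact measurableSet_Iic

/-- The event: the cluster of `0` is exactly `(-(m+1), n+1)` and all its sites regenerate. -/
def bSet (X Z : ℤ → Ω → ℝ) (s u : ℝ) (n m : ℕ) : Set Ω :=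
  ⋂ j ∈ bIdx n m, Sum.elim X Z j ⁻¹' bTarget s u n m j

lemma mem_bSet {s u : ℝ} {n m : ℕ} {ω : Ω} :
    ω ∈ bSet X Z s u n m ↔
      (∀ k : ℤ, -(m : ℤ) ≤ k → k ≤ (n : ℤ) → X k ω ≤ s) ∧
        s < X ((n : ℤ) + 1) ω ∧ s < X (-(m : ℤ) - 1) ω ∧
        (∀ i : ℤ, -(m : ℤ) ≤ i → i ≤ (n : ℤ) → Z i ω ≤ u) := by
  simp only [bSet, bIdx, bTarget, Set.mem_iInter, Finset.mem_union, Finset.mem_image,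
    Finset.mem_Icc]
  constructor
  · intro H
    refine ⟨fun k h1 h2 => ?_, ?_, ?_, fun i h1 h2 => ?_⟩
    · have := H (Sum.inl k) (Or.inl ⟨k, ⟨by omega, by omega⟩, rfl⟩)
      simp only [Sum.elim_inl, Set.mem_preimage] at this
      rw [if_neg (by omega)] at this
      exact this
    · have := H (Sum.inl ((n : ℤ) + 1)) (Or.inl ⟨_, ⟨by omega, by omega⟩, rfl⟩)
      simp only [Sum.elim_inl, Set.mem_preimage] at this
      simpa using this
    · have := H (Sum.inl (-(m : ℤ) - 1)) (Or.inl ⟨_, ⟨by omega, by omega⟩, rfl⟩)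
      simp only [Sum.elim_inl, Set.mem_preimage] at this
      simpa using this
    · have := H (Sum.inr i) (Or.inr ⟨i, ⟨h1, h2⟩, rfl⟩)
      simpa using this
  · rintro ⟨h1, h2, h3, h4⟩ j hj
    rcases hj with ⟨k, ⟨hk1, hk2⟩, rfl⟩ | ⟨i, ⟨hi1, hi2⟩, rfl⟩
    · simp only [Sum.elim_inl, Set.mem_preimage]
      by_cases hk : k = (n : ℤ) + 1 ∨ k = -(m : ℤ) - 1
      · rw [if_pos hk]
        rcases hk with rfl | rfl
        · exact h2
        · exact h3
      · rw [if_neg hk]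
        exact h1 k (by omega) (by omega)
    · simpa using h4 i hi1 hi2

lemma bSet_measurable (hmeasX : ∀ i, Measurable (X i)) (hmeasZ : ∀ i, Measurable (Z i))
    (s u : ℝ) (n m : ℕ) : MeasurableSet (bSet X Z s u n m) := by
  refine Finset.measurableSet_biInter _ fun j _ => ?_
  rcases j with k | i
  · exact (hmeasX k) (bTarget_measurable s u n m (Sum.inl k))
  · exact (hmeasZ i) (bTarget_measurable s u n m (Sum.inr i))

lemma measX_Ioi (hexpX : ∀ (i : ℤ) (s : ℝ), 0 ≤ s → μ {ω | s < X i ω}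
      = ENNReal.ofReal (Real.exp (-s))) (i : ℤ) {s : ℝ} (hs : 0 ≤ s) :
    μ (X i ⁻¹' Set.Ioi s) = ENNReal.ofReal (Real.exp (-s)) := by
  have : X i ⁻¹' Set.Ioi s = {ω | s < X i ω} := rfl
  rw [this, hexpX i s hs]

lemma measX_Iic (hmeasX : ∀ i, Measurable (X i))
    (hexpX : ∀ (i : ℤ) (s : ℝ), 0 ≤ s → μ {ω | s < X i ω}
      = ENNReal.ofReal (Real.exp (-s))) (i : ℤ) {s : ℝ} (hs : 0 ≤ s) :
    μ (X i ⁻¹' Set.Iic s) = ENNReal.ofReal (1 - Real.exp (-s)) := by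
  have h1 : X i ⁻¹' Set.Iic s = {ω | s < X i ω}ᶜ := by
    ext ω; simp [not_lt]
  rw [h1, prob_compl_eq_one_sub (measurableSet_lt measurable_const (hmeasX i)),
    hexpX i s hs, ENNReal.ofReal_sub _ (Real.exp_nonneg _), ENNReal.ofReal_one]

/-- Measure of the decomposition event. -/
lemma meas_bSet (hmeasX : ∀ i, Measurable (X i)) (hmeasZ : ∀ i, Measurable (Z i))
    (hindep : iIndepFun (Sum.elim X Z) μ)
    (hexpX : ∀ (i : ℤ) (s : ℝ), 0 ≤ s → μ {ω | s < X i ω} = ENNReal.ofReal (Real.exp (-s)))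
    (hexpZ : ∀ (i : ℤ) (s : ℝ), 0 ≤ s → μ {ω | s < Z i ω} = ENNReal.ofReal (Real.exp (-s)))
    {s u : ℝ} (hs : 0 ≤ s) (hu : 0 ≤ u) (n m : ℕ) :
    μ (bSet X Z s u n m) = ENNReal.ofReal (Real.exp (-s)) ^ 2 *
      (ENNReal.ofReal (1 - Real.exp (-s)) * ENNReal.ofReal (1 - Real.exp (-u))) ^ (n + m + 1) := by
  have hmeasZpre : ∀ i : ℤ, Measurable (Z i) := hmeasZ
  rw [bSet, hindep.measure_inter_preimage_eq_mul _ (fun j _ => bTarget_measurable s u n m j)]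
  rw [bIdx, Finset.prod_union]
  swap
  · simp only [Finset.disjoint_left, Finset.mem_image]
    rintro j ⟨k, _, rfl⟩ ⟨i, _, h⟩
    exact Sum.inl_ne_inr h.symm
  rw [Finset.prod_image (fun a _ b _ h => Sum.inl.inj h),
    Finset.prod_image (fun a _ b _ h => Sum.inr.inj h)]
  have hZside : ∏ i ∈ Finset.Icc (-(m : ℤ)) (n : ℤ),
      μ (Sum.elim X Z (Sum.inr i) ⁻¹' bTarget s u n m (Sum.inr i))
      = ENNReal.ofReal (1 - Real.exp (-u)) ^ (n + m + 1) := by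
    have : ∀ i ∈ Finset.Icc (-(m : ℤ)) (n : ℤ),
        μ (Sum.elim X Z (Sum.inr i) ⁻¹' bTarget s u n m (Sum.inr i))
          = ENNReal.ofReal (1 - Real.exp (-u)) := by
      intro i _
      have h1 : Sum.elim X Z (Sum.inr i) ⁻¹' bTarget s u n m (Sum.inr i)
          = Z i ⁻¹' Set.Iic u := rfl
      rw [h1, measX_Iic hmeasZ hexpZ i hu]
    rw [Finset.prod_congr rfl this, Finset.prod_const, Int.card_Icc]
    congr 1
    omega
  rw [hZside]
  have hsplit : Finset.Icc (-(m : ℤ) - 1) ((n : ℤ) + 1) =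
      insert (-(m : ℤ) - 1) (insert ((n : ℤ) + 1) (Finset.Icc (-(m : ℤ)) (n : ℤ))) := by
    ext k
    simp only [Finset.mem_Icc, Finset.mem_insert]
    omega
  rw [hsplit, Finset.prod_insert (by simp only [Finset.mem_insert, Finset.mem_Icc]; omega),
    Finset.prod_insert (by simp only [Finset.mem_Icc]; omega)]
  have hb1 : Sum.elim X Z (Sum.inl (-(m : ℤ) - 1)) ⁻¹' bTarget s u n m (Sum.inl (-(m : ℤ) - 1))
      = X (-(m : ℤ) - 1) ⁻¹' Set.Ioi s := by
    simp [bTarget]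
  have hb2 : Sum.elim X Z (Sum.inl ((n : ℤ) + 1)) ⁻¹' bTarget s u n m (Sum.inl ((n : ℤ) + 1))
      = X ((n : ℤ) + 1) ⁻¹' Set.Ioi s := by
    simp [bTarget]
  rw [hb1, hb2, measX_Ioi hexpX _ hs, measX_Ioi hexpX _ hs]
  have hint : ∏ k ∈ Finset.Icc (-(m : ℤ)) (n : ℤ),
      μ (Sum.elim X Z (Sum.inl k) ⁻¹' bTarget s u n m (Sum.inl k))
      = ENNReal.ofReal (1 - Real.exp (-s)) ^ (n + m + 1) := by
    have : ∀ k ∈ Finset.Icc (-(m : ℤ)) (n : ℤ),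
        μ (Sum.elim X Z (Sum.inl k) ⁻¹' bTarget s u n m (Sum.inl k))
          = ENNReal.ofReal (1 - Real.exp (-s)) := by
      intro k hk
      simp only [Finset.mem_Icc] at hk
      have h1 : Sum.elim X Z (Sum.inl k) ⁻¹' bTarget s u n m (Sum.inl k)
          = X k ⁻¹' Set.Iic s := by
        simp only [bTarget, Sum.elim_inl]
        rw [if_neg (by omega)]
      rw [h1, measX_Iic hmeasX hexpX k hs]
    rw [Finset.prod_congr rfl this, Finset.prod_const, Int.card_Icc]
    congr 1
    omega
  rw [hint, mul_pow]
  ring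

/-- Almost surely some `X (f n)` exceeds level `s > 0`, for injective `f`. -/
lemma tail_null (hmeasX : ∀ i, Measurable (X i))
    (hindep : iIndepFun (Sum.elim X Z) μ)
    (hexpX : ∀ (i : ℤ) (s : ℝ), 0 ≤ s → μ {ω | s < X i ω} = ENNReal.ofReal (Real.exp (-s)))
    {s : ℝ} (hs : 0 < s) (f : ℕ → ℤ) (hf : Function.Injective f) :
    μ {ω | ∀ n : ℕ, X (f n) ω ≤ s} = 0 := by
  set c : ENNReal := ENNReal.ofReal (1 - Real.exp (-s)) with hc
  have hc1 : c < 1 := by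
    rw [hc]
    exact ENNReal.ofReal_lt_one.2 (by nlinarith [Real.exp_pos (-s)])
  have hN : ∀ N : ℕ, μ {ω | ∀ n : ℕ, X (f n) ω ≤ s} ≤ c ^ N := by
    intro N
    have hsub : {ω | ∀ n : ℕ, X (f n) ω ≤ s} ⊆
        ⋂ j ∈ (Finset.range N).image (fun a => Sum.inl (f a)),
          Sum.elim X Z j ⁻¹' (fun _ : ℤ ⊕ ℤ => Set.Iic s) j := by
      intro ω hω
      simp only [Set.mem_iInter, Finset.mem_image, Finset.mem_range]
      rintro j ⟨a, _, rfl⟩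
      simpa using hω a
    refine le_trans (measure_mono hsub) ?_
    rw [hindep.measure_inter_preimage_eq_mul _ (fun j _ => measurableSet_Iic)]
    rw [Finset.prod_image (fun a _ b _ h => hf (Sum.inl.inj h))]
    have : ∀ a ∈ Finset.range N,
        μ (Sum.elim X Z (Sum.inl (f a)) ⁻¹' Set.Iic s) = c := by
      intro a _
      exact measX_Iic hmeasX hexpX (f a) hs.le
    rw [Finset.prod_congr rfl this, Finset.prod_const, Finset.card_range]
  have htend : Tendsto (fun N : ℕ => c ^ N) atTop (nhds 0) :=
    ENNReal.tendsto_pow_atTop_nhds_zero_of_lt_one hc1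
  have := ge_of_tendsto htend (Filter.Eventually.of_forall hN)
  exact le_antisymm this zero_le

end Statement10Aux

open Statement10Aux

theorem statement10
    {Ω : Type*} [MeasurableSpace Ω] (μ : Measure Ω) [IsProbabilityMeasure μ]
    (X Z : ℤ → Ω → ℝ)
    (hmeasX : ∀ i, Measurable (X i)) (hmeasZ : ∀ i, Measurable (Z i))
    (hindep : iIndepFun (Sum.elim X Z) μ)
    (hexpX : ∀ (i : ℤ) (s : ℝ), 0 ≤ s → μ {ω | s < X i ω} = ENNReal.ofReal (Real.exp (-s)))
    (hexpZ : ∀ (i : ℤ) (s : ℝ), 0 ≤ s → μ {ω | s < Z i ω} = ENNReal.ofReal (Real.exp (-s)))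
    (l τ h : ℝ) (hl : l ∈ Set.Ioo (0 : ℝ) 1) (hτ : 0 < τ) (hh : 0 < h) :
    -- almost surely, the right and left boundaries of the occupied cluster around `0`
    -- at time `τ·log(1/λ)` are well-defined
    (∀ᵐ ω ∂μ, (∃ k : ℤ, 1 ≤ k ∧ τ * Real.log (1 / l) < X k ω) ∧
        (∃ k : ℤ, k ≤ -1 ∧ τ * Real.log (1 / l) < X k ω)) ∧
    -- and the probability that either the site `0` is vacant at time `τ·log(1/λ)`, or it is
    -- occupied and every site of its occupied cluster regenerates within a further
    -- time `h·log(1/λ)`, is the displayed quantity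
    μ {ω | τ * Real.log (1 / l) < X 0 ω ∨
        (X 0 ω ≤ τ * Real.log (1 / l) ∧
          ∀ i : ℤ,
            (∀ k : ℤ, (1 ≤ k ∧ k ≤ i) ∨ (i ≤ k ∧ k ≤ -1) → X k ω ≤ τ * Real.log (1 / l)) →
            Z i ω ≤ h * Real.log (1 / l))}
      = ENNReal.ofReal
          (l ^ τ + l ^ (2 * τ) * (1 - l ^ τ) * (1 - l ^ h)
              / (l ^ τ + l ^ h - l ^ (τ + h)) ^ 2) := by
  classical
  obtain ⟨hl0, hl1⟩ := hl
  have hlog : 0 < Real.log (1 / l) := Real.log_pos (one_lt_one_div hl0 hl1)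
  set s : ℝ := τ * Real.log (1 / l) with hs_def
  set u : ℝ := h * Real.log (1 / l) with hu_def
  have hs : 0 < s := mul_pos hτ hlog
  have hu : 0 < u := mul_pos hh hlog
  -- identify exponentials with rpow
  have hps : Real.exp (-s) = l ^ τ := by
    rw [Real.rpow_def_of_pos hl0, hs_def, one_div, Real.log_inv]
    congr 1
    ring
  have hqu : Real.exp (-u) = l ^ h := by
    rw [Real.rpow_def_of_pos hl0, hu_def, one_div, Real.log_inv]
    congr 1
    ring
  set p : ℝ := l ^ τ with hp_def
  set q : ℝ := l ^ h with hq_def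
  have hp0 : 0 < p := Real.rpow_pos_of_pos hl0 τ
  have hp1 : p < 1 := Real.rpow_lt_one hl0.le hl1 hτ
  have hq0 : 0 < q := Real.rpow_pos_of_pos hl0 h
  have hq1 : q < 1 := Real.rpow_lt_one hl0.le hl1 hh
  -- the two a.s. tail statements
  have hright : μ {ω | ∀ k : ℤ, 1 ≤ k → X k ω ≤ s} = 0 := by
    refine measure_mono_null ?_
      (tail_null (μ := μ) (Z := Z) hmeasX hindep hexpX hs (fun n => (n : ℤ) + 1)
        (by intro a b hab; dsimp only at hab; omega))
    intro ω hω n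
    exact hω ((n : ℤ) + 1) (by omega)
  have hleft : μ {ω | ∀ k : ℤ, k ≤ -1 → X k ω ≤ s} = 0 := by
    refine measure_mono_null ?_
      (tail_null (μ := μ) (Z := Z) hmeasX hindep hexpX hs (fun n => -(n : ℤ) - 1)
        (by intro a b hab; dsimp only at hab; omega))
    intro ω hω n
    exact hω (-(n : ℤ) - 1) (by omega)
  have hae : ∀ᵐ ω ∂μ, (∃ k : ℤ, 1 ≤ k ∧ s < X k ω) ∧ (∃ k : ℤ, k ≤ -1 ∧ s < X k ω) := by
    rw [ae_iff]
    refine measure_mono_null ?_ (measure_union_null hright hleft)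
    intro ω hω
    simp only [Set.mem_setOf_eq] at hω
    rw [not_and_or] at hω
    push_neg at hω
    rcases hω with hω | hω
    · exact Or.inl fun k hk => hω k hk
    · exact Or.inr fun k hk => hω k hk
  refine ⟨hae, ?_⟩
  -- the event and its decomposition
  set E : Set Ω := {ω | s < X 0 ω ∨
      (X 0 ω ≤ s ∧ ∀ i : ℤ,
        (∀ k : ℤ, (1 ≤ k ∧ k ≤ i) ∨ (i ≤ k ∧ k ≤ -1) → X k ω ≤ s) → Z i ω ≤ u)} with hE_def
  set A : Set Ω := {ω | s < X 0 ω} with hA_def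
  set E' : Set Ω := A ∪ ⋃ nm : ℕ × ℕ, bSet X Z s u nm.1 nm.2 with hE'_def
  -- E and E' agree on the a.s. event
  have hEE' : E =ᵐ[μ] E' := by
    filter_upwards [hae] with ω hω
    obtain ⟨⟨kr, hkr1, hkr2⟩, ⟨kl, hkl1, hkl2⟩⟩ := hω
    show (ω ∈ E) = (ω ∈ E')
    apply propext
    constructor
    · rintro (h0 | ⟨h0, hZc⟩)
      · exact Or.inl h0
      · refine Or.inr ?_
        -- find the minimal right and left indices
        have hPex : ∃ j : ℕ, s < X ((j : ℤ) + 1) ω := by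
          refine ⟨(kr - 1).toNat, ?_⟩
          have : ((kr - 1).toNat : ℤ) + 1 = kr := by omega
          rw [this]; exact hkr2
        have hQex : ∃ j : ℕ, s < X (-(j : ℤ) - 1) ω := by
          refine ⟨(-kl - 1).toNat, ?_⟩
          have : -((-kl - 1).toNat : ℤ) - 1 = kl := by omega
          rw [this]; exact hkl2
        set n := Nat.find hPex with hn_def
        set m := Nat.find hQex with hm_def
        have hn1 : s < X ((n : ℤ) + 1) ω := Nat.find_spec hPex
        have hm1 : s < X (-(m : ℤ) - 1) ω := Nat.find_spec hQex
        have hnlt : ∀ j : ℕ, j < n → X ((j : ℤ) + 1) ω ≤ s := by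
          intro j hj
          exact not_lt.1 (Nat.find_min hPex hj)
        have hmlt : ∀ j : ℕ, j < m → X (-(j : ℤ) - 1) ω ≤ s := by
          intro j hj
          exact not_lt.1 (Nat.find_min hQex hj)
        have hXint : ∀ k : ℤ, -(m : ℤ) ≤ k → k ≤ (n : ℤ) → X k ω ≤ s := by
          intro k h1 h2
          rcases lt_trichotomy k 0 with hk | hk | hk
          · have := hmlt (-k - 1).toNat (by omega)
            have he : -(((-k - 1).toNat : ℤ)) - 1 = k := by omega
            rwa [he] at this
          · subst hk; exact h0
          · have := hnlt (k - 1).toNat (by omega)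
            have he : (((k - 1).toNat : ℤ)) + 1 = k := by omega
            rwa [he] at this
        refine Set.mem_iUnion.2 ⟨(n, m), ?_⟩
        rw [mem_bSet]
        refine ⟨hXint, hn1, hm1, fun i hi1 hi2 => ?_⟩
        refine hZc i fun k hk => ?_
        rcases hk with ⟨hk1, hk2⟩ | ⟨hk1, hk2⟩
        · exact hXint k (by omega) (by omega)
        · exact hXint k (by omega) (by omega)
    · rintro (h0 | hB)
      · exact Or.inl h0
      · obtain ⟨⟨nn, mm⟩, hB⟩ := Set.mem_iUnion.1 hB
        rw [mem_bSet] at hB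
        obtain ⟨hXint, hn1, hm1, hZint⟩ := hB
        refine Or.inr ⟨hXint 0 (by omega) (by omega), fun i hyp => ?_⟩
        have hile : i ≤ (nn : ℤ) := by
          by_contra hi
          push_neg at hi
          have := hyp ((nn : ℤ) + 1) (Or.inl ⟨by omega, by omega⟩)
          exact absurd this (not_le.2 hn1)
        have hige : -(mm : ℤ) ≤ i := by
          by_contra hi
          push_neg at hi
          have := hyp (-(mm : ℤ) - 1) (Or.inr ⟨by omega, by omega⟩)
          exact absurd this (not_le.2 hm1)
        exact hZint i hige hile
  have hmeasb : ∀ nm : ℕ × ℕ, MeasurableSet (bSet X Z s u nm.1 nm.2) :=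
    fun nm => bSet_measurable hmeasX hmeasZ s u nm.1 nm.2
  -- pairwise disjointness
  have hdisjb : Pairwise (Function.onFun Disjoint
      (fun nm : ℕ × ℕ => bSet X Z s u nm.1 nm.2)) := by
    rintro ⟨n1, m1⟩ ⟨n2, m2⟩ hne
    have key : ∀ n1 m1 n2 m2 : ℕ, n1 < n2 →
        Disjoint (bSet X Z s u n1 m1) (bSet X Z s u n2 m2) := by
      intro n1 m1 n2 m2 hlt
      rw [Set.disjoint_left]
      intro ω h1 h2
      rw [mem_bSet] at h1 h2
      have := h2.1 ((n1 : ℤ) + 1) (by omega) (by omega)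
      exact absurd this (not_le.2 h1.2.1)
    have keym : ∀ n1 m1 n2 m2 : ℕ, m1 < m2 →
        Disjoint (bSet X Z s u n1 m1) (bSet X Z s u n2 m2) := by
      intro n1 m1 n2 m2 hlt
      rw [Set.disjoint_left]
      intro ω h1 h2
      rw [mem_bSet] at h1 h2
      have := h2.1 (-(m1 : ℤ) - 1) (by omega) (by omega)
      exact absurd this (not_le.2 h1.2.2.1)
    simp only [Function.onFun]
    rcases Nat.lt_trichotomy n1 n2 with hn | hn | hn
    · exact key _ _ _ _ hn
    · subst hn
      rcases Nat.lt_trichotomy m1 m2 with hm | hm | hm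
      · exact keym _ _ _ _ hm
      · exact absurd (by rw [hm]) hne
      · exact (keym _ _ _ _ hm).symm
    · exact (key _ _ _ _ hn).symm
  -- A is disjoint from the union
  have hdisjA : Disjoint A (⋃ nm : ℕ × ℕ, bSet X Z s u nm.1 nm.2) := by
    rw [Set.disjoint_left]
    intro ω hA' hB'
    obtain ⟨⟨nn, mm⟩, hB'⟩ := Set.mem_iUnion.1 hB'
    rw [mem_bSet] at hB'
    exact absurd (hB'.1 0 (by omega) (by omega)) (not_le.2 hA')
  have hmeasA : MeasurableSet A := (hmeasX 0) measurableSet_Ioi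
  -- compute the measure
  have hmuE : μ E = μ A + ∑' nm : ℕ × ℕ, μ (bSet X Z s u nm.1 nm.2) := by
    rw [measure_congr hEE', hE'_def,
      measure_union hdisjA (MeasurableSet.iUnion hmeasb), measure_iUnion hdisjb hmeasb]
  have hmuA : μ A = ENNReal.ofReal p := by
    have : A = {ω | s < X 0 ω} := rfl
    rw [this, hexpX 0 s hs.le, hps]
  -- values of the building blocks
  have hofs : ENNReal.ofReal (Real.exp (-s)) = ENNReal.ofReal p := by rw [hps]
  have hc_eq : ENNReal.ofReal (1 - Real.exp (-s)) * ENNReal.ofReal (1 - Real.exp (-u))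
      = ENNReal.ofReal ((1 - p) * (1 - q)) := by
    rw [hps, hqu, ENNReal.ofReal_mul (by linarith)]
  set x : ℝ := (1 - p) * (1 - q) with hx_def
  have hx0 : 0 ≤ x := mul_nonneg (by linarith) (by linarith)
  have hx1 : x < 1 := by
    rw [hx_def]
    nlinarith
  have hmub : ∀ nm : ℕ × ℕ, μ (bSet X Z s u nm.1 nm.2)
      = ENNReal.ofReal p ^ 2 * ENNReal.ofReal x ^ (nm.1 + nm.2 + 1) := by
    intro nm
    rw [meas_bSet hmeasX hmeasZ hindep hexpX hexpZ hs.le hu.le nm.1 nm.2, hofs, hc_eq]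
  -- sum the geometric series
  have hsum : ∑' nm : ℕ × ℕ, μ (bSet X Z s u nm.1 nm.2)
      = ENNReal.ofReal p ^ 2 * ENNReal.ofReal x *
        ((1 - ENNReal.ofReal x)⁻¹ * (1 - ENNReal.ofReal x)⁻¹) := by
    rw [tsum_congr hmub, ENNReal.tsum_prod']
    have hinner : ∀ n : ℕ, (∑' m : ℕ, ENNReal.ofReal p ^ 2 * ENNReal.ofReal x ^ (n + m + 1))
        = (ENNReal.ofReal p ^ 2 * ENNReal.ofReal x ^ (n + 1)) * (1 - ENNReal.ofReal x)⁻¹ := by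
      intro n
      have : ∀ m : ℕ, ENNReal.ofReal p ^ 2 * ENNReal.ofReal x ^ (n + m + 1)
          = (ENNReal.ofReal p ^ 2 * ENNReal.ofReal x ^ (n + 1)) * ENNReal.ofReal x ^ m := by
        intro m; ring
      rw [tsum_congr this, ENNReal.tsum_mul_left, ENNReal.tsum_geometric]
    rw [tsum_congr hinner]
    have : ∀ n : ℕ, (ENNReal.ofReal p ^ 2 * ENNReal.ofReal x ^ (n + 1)) *
        (1 - ENNReal.ofReal x)⁻¹
        = (ENNReal.ofReal p ^ 2 * ENNReal.ofReal x * (1 - ENNReal.ofReal x)⁻¹) *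
          ENNReal.ofReal x ^ n := by
      intro n; ring
    rw [tsum_congr this, ENNReal.tsum_mul_left, ENNReal.tsum_geometric]
    ring
  -- convert to real arithmetic
  have hxsub : (1 : ENNReal) - ENNReal.ofReal x = ENNReal.ofReal (1 - x) := by
    rw [ENNReal.ofReal_sub _ hx0, ENNReal.ofReal_one]
  have hxinv : (1 - ENNReal.ofReal x)⁻¹ = ENNReal.ofReal (1 - x)⁻¹ := by
    rw [hxsub, ENNReal.ofReal_inv_of_pos (by linarith)]
  have h1x : (0:ℝ) < 1 - x := by linarith
  have hfinal : μ E = ENNReal.ofReal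
      (p + p ^ 2 * x * ((1 - x)⁻¹ * (1 - x)⁻¹)) := by
    have e1 : ENNReal.ofReal (p + p ^ 2 * x * ((1 - x)⁻¹ * (1 - x)⁻¹))
        = ENNReal.ofReal p + ENNReal.ofReal p ^ 2 * ENNReal.ofReal x *
          (ENNReal.ofReal (1 - x)⁻¹ * ENNReal.ofReal (1 - x)⁻¹) := by
      rw [ENNReal.ofReal_add hp0.le
          (mul_nonneg (mul_nonneg (by positivity) hx0)
            (mul_nonneg (inv_nonneg.2 h1x.le) (inv_nonneg.2 h1x.le))),
        ENNReal.ofReal_mul (mul_nonneg (by positivity) hx0),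
        ENNReal.ofReal_mul (by positivity : (0:ℝ) ≤ p ^ 2),
        ENNReal.ofReal_mul (inv_nonneg.2 h1x.le), ENNReal.ofReal_pow hp0.le]
    rw [hmuE, hmuA, hsum, hxinv, e1]
  rw [hfinal]
  congr 1
  have h2τ : l ^ (2 * τ) = p ^ 2 := by
    rw [hp_def, ← Real.rpow_natCast (l ^ τ) 2, ← Real.rpow_mul hl0.le]
    norm_num
    rw [mul_comm]
  have hτh : l ^ (τ + h) = p * q := Real.rpow_add hl0 τ h
  rw [h2τ, hτh]
  have hd : 1 - x = p + q - p * q := by rw [hx_def]; ring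
  have hd0 : p + q - p * q > 0 := by nlinarith
  rw [hd]
  field_simp
  ring
end

section
/- Fix τ > 0. For λ ∈ (0,1) set s_λ = τ·log(1/λ); define the occupied cluster C_λ(ω) = ∅ if X 0(ω) > s_λ, and otherwise C_λ(ω) = { i ∈ ℤ : l_λ(ω) < i < r_λ(ω) } where r_λ(ω) = min{ k ≥ 1 : X k(ω) > s_λ } and l_λ(ω) = max{ k ≤ −1 : X k(ω) > s_λ } (almost surely well-defined); and define the rescaled regeneration time Ξ_λ(ω) = (1/log(1/λ))·sup{ Z i(ω) : i ∈ C_λ(ω) }, with the convention that the supremum over the empty set is 0. Then for every δ > 0, ℙ( |Ξ_λ − τ| ≥ δ ) tends to 0 as λ → 0⁺ with λ ∈ (0,1). -/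
open MeasureTheory ProbabilityTheory Filter

/-- The occupied cluster around site `0` at time `τ·log(1/λ)`: it is empty when no seed has
fallen on `0`, and otherwise consists of the integers `i` such that every site strictly
between `0` and `i` (together with `i` itself) has received a seed by time `τ·log(1/λ)`. -/
def cluster {Ω : Type*} (X : ℤ → Ω → ℝ) (τ l : ℝ) (ω : Ω) : Set ℤ :=
  {i : ℤ | X 0 ω ≤ τ * Real.log (1 / l) ∧
    ∀ k : ℤ, (1 ≤ k ∧ k ≤ i) ∨ (i ≤ k ∧ k ≤ -1) → X k ω ≤ τ * Real.log (1 / l)}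

/-- The rescaled regeneration time `Ξ_λ = (1/log(1/λ))·sup{ Z i : i ∈ C_λ }`
(with `sSup ∅ = 0` by the real-number convention). -/
noncomputable def Xi {Ω : Type*} (X Z : ℤ → Ω → ℝ) (τ l : ℝ) (ω : Ω) : ℝ :=
  (1 / Real.log (1 / l)) * sSup ((fun i => Z i ω) '' cluster X τ l ω)

namespace S11
open Set

noncomputable def Mfun (τ δ l : ℝ) : ℕ := ⌈l ^ (-(τ + δ/4))⌉₊
noncomputable def Nfun (τ δ l : ℝ) : ℕ := ⌈l ^ (-(τ - δ/2))⌉₊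

noncomputable def gfun (τ δ l : ℝ) : ℝ :=
  2*(1 - l^τ)^(Mfun τ δ l) + (2*(Mfun τ δ l : ℝ)+1)*l^(τ+δ/2)
  + ((Nfun τ δ l : ℝ)+1)*l^τ + (1 - l^(τ-δ))^(Nfun τ δ l + 1)

lemma one_sub_pow_le_exp {x : ℝ} (hx0 : 0 ≤ x) (hx1 : x ≤ 1) (n : ℕ) :
    (1 - x) ^ n ≤ Real.exp (-((n : ℝ) * x)) := by
  calc (1 - x) ^ n ≤ (Real.exp (-x)) ^ n := by
        apply pow_le_pow_left₀ (by linarith)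
        have := Real.add_one_le_exp (-x); linarith
    _ = Real.exp (-((n : ℝ) * x)) := by
        rw [← Real.exp_nat_mul]; ring_nf

lemma log_tendsto : Tendsto Real.log (nhdsWithin 0 (Set.Ioo (0:ℝ) 1)) atBot :=
  Real.tendsto_log_nhdsGT_zero.mono_left
    (nhdsWithin_mono _ (fun x hx => hx.1))

lemma rpow_tendsto {c : ℝ} (hc : 0 < c) :
    Tendsto (fun l : ℝ => l ^ c) (nhdsWithin 0 (Set.Ioo (0:ℝ) 1)) (nhds 0) := by
  have h1 : Tendsto (fun l : ℝ => Real.exp (Real.log l * c))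
      (nhdsWithin 0 (Set.Ioo (0:ℝ) 1)) (nhds 0) :=
    Real.tendsto_exp_atBot.comp (log_tendsto.atBot_mul_const hc)
  refine h1.congr' ?_
  filter_upwards [self_mem_nhdsWithin] with l hl
  rw [Real.rpow_def_of_pos hl.1]

lemma rpow_neg_tendsto {c : ℝ} (hc : 0 < c) :
    Tendsto (fun l : ℝ => l ^ (-c)) (nhdsWithin 0 (Set.Ioo (0:ℝ) 1)) atTop := by
  have h1 : Tendsto (fun l : ℝ => Real.exp (Real.log l * (-c)))
      (nhdsWithin 0 (Set.Ioo (0:ℝ) 1)) atTop := by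
    apply Real.tendsto_exp_atTop.comp
    have h2 : Tendsto (fun l : ℝ => -(Real.log l * c)) (nhdsWithin 0 (Set.Ioo (0:ℝ) 1)) atTop :=
      tendsto_neg_atBot_atTop.comp (log_tendsto.atBot_mul_const hc)
    refine h2.congr (fun l => by ring)
  refine h1.congr' ?_
  filter_upwards [self_mem_nhdsWithin] with l hl
  rw [Real.rpow_def_of_pos hl.1]

lemma exp_neg_rpow_tendsto {c : ℝ} (hc : 0 < c) :
    Tendsto (fun l : ℝ => Real.exp (-(l ^ (-c)))) (nhdsWithin 0 (Set.Ioo (0:ℝ) 1)) (nhds 0) := by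
  have := Real.tendsto_exp_neg_atTop_nhds_zero.comp (rpow_neg_tendsto hc)
  exact this

lemma gfun_tendsto (τ δ : ℝ) (hτ : 0 < τ) (hδ : 0 < δ) (hδτ : δ < τ) :
    Tendsto (gfun τ δ) (nhdsWithin 0 (Set.Ioo (0:ℝ) 1)) (nhds 0) := by
  have hIoo := (self_mem_nhdsWithin :
    Set.Ioo (0:ℝ) 1 ∈ nhdsWithin 0 (Set.Ioo (0:ℝ) 1))
  -- common facts on Ioo
  have hfacts : ∀ l ∈ Set.Ioo (0:ℝ) 1, (∀ c : ℝ, 0 ≤ l ^ c) ∧ (∀ c : ℝ, 0 ≤ c → l ^ c ≤ 1) :=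
    fun l hl => ⟨fun c => Real.rpow_nonneg hl.1.le c,
      fun c hc => Real.rpow_le_one hl.1.le hl.2.le hc⟩
  -- Term 1
  have T1 : Tendsto (fun l : ℝ => 2*(1 - l^τ)^(Mfun τ δ l))
      (nhdsWithin 0 (Set.Ioo (0:ℝ) 1)) (nhds 0) := by
    have hup : Tendsto (fun l : ℝ => 2 * Real.exp (-(l ^ (-(δ/4)))))
        (nhdsWithin 0 (Set.Ioo (0:ℝ) 1)) (nhds 0) := by
      have := (exp_neg_rpow_tendsto (by linarith : (0:ℝ) < δ/4)).const_mul (2:ℝ)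
      simpa using this
    refine tendsto_of_tendsto_of_tendsto_of_le_of_le' tendsto_const_nhds hup ?_ ?_
    · filter_upwards [hIoo] with l hl
      have := (hfacts l hl).2 τ hτ.le
      have h0 : (0:ℝ) ≤ 1 - l^τ := by linarith
      positivity
    · filter_upwards [hIoo] with l hl
      obtain ⟨hnn, hle1⟩ := hfacts l hl
      have step1 : (1 - l^τ)^(Mfun τ δ l) ≤ Real.exp (-((Mfun τ δ l : ℝ) * l^τ)) :=
        one_sub_pow_le_exp (hnn τ) (hle1 τ hτ.le) _
      have step2 : l ^ (-(δ/4)) ≤ (Mfun τ δ l : ℝ) * l^τ := by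
        have hM : l ^ (-(τ + δ/4)) ≤ (Mfun τ δ l : ℝ) := Nat.le_ceil _
        have key : l ^ (-(τ + δ/4)) * l^τ = l ^ (-(δ/4)) := by
          rw [← Real.rpow_add hl.1]; ring_nf
        calc l ^ (-(δ/4)) = l ^ (-(τ + δ/4)) * l^τ := key.symm
          _ ≤ (Mfun τ δ l : ℝ) * l^τ := mul_le_mul_of_nonneg_right hM (hnn τ)
      have := Real.exp_le_exp.mpr (neg_le_neg step2)
      nlinarith [step1.trans this]
  -- Term 2
  have T2 : Tendsto (fun l : ℝ => (2*(Mfun τ δ l : ℝ)+1)*l^(τ+δ/2))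
      (nhdsWithin 0 (Set.Ioo (0:ℝ) 1)) (nhds 0) := by
    have hup : Tendsto (fun l : ℝ => 2*l^(δ/4) + 3*l^(τ+δ/2))
        (nhdsWithin 0 (Set.Ioo (0:ℝ) 1)) (nhds 0) := by
      have h1 := (rpow_tendsto (by linarith : (0:ℝ) < δ/4)).const_mul (2:ℝ)
      have h2 := (rpow_tendsto (by linarith : (0:ℝ) < τ+δ/2)).const_mul (3:ℝ)
      simpa using h1.add h2
    refine tendsto_of_tendsto_of_tendsto_of_le_of_le' tendsto_const_nhds hup ?_ ?_
    · filter_upwards [hIoo] with l hl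
      exact mul_nonneg (by positivity) ((hfacts l hl).1 _)
    · filter_upwards [hIoo] with l hl
      obtain ⟨hnn, _⟩ := hfacts l hl
      have hM : (Mfun τ δ l : ℝ) ≤ l ^ (-(τ + δ/4)) + 1 :=
        (Nat.ceil_lt_add_one (hnn _)).le
      have key : l ^ (-(τ + δ/4)) * l^(τ+δ/2) = l ^ (δ/4) := by
        rw [← Real.rpow_add hl.1]; ring_nf
      nlinarith [mul_le_mul_of_nonneg_right hM (hnn (τ+δ/2)), hnn (τ+δ/2), hnn (δ/4)]
  -- Term 3
  have T3 : Tendsto (fun l : ℝ => ((Nfun τ δ l : ℝ)+1)*l^τ)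
      (nhdsWithin 0 (Set.Ioo (0:ℝ) 1)) (nhds 0) := by
    have hup : Tendsto (fun l : ℝ => l^(δ/2) + 2*l^τ)
        (nhdsWithin 0 (Set.Ioo (0:ℝ) 1)) (nhds 0) := by
      have h1 := rpow_tendsto (by linarith : (0:ℝ) < δ/2)
      have h2 := (rpow_tendsto hτ).const_mul (2:ℝ)
      simpa using h1.add h2
    refine tendsto_of_tendsto_of_tendsto_of_le_of_le' tendsto_const_nhds hup ?_ ?_
    · filter_upwards [hIoo] with l hl
      exact mul_nonneg (by positivity) ((hfacts l hl).1 _)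
    · filter_upwards [hIoo] with l hl
      obtain ⟨hnn, _⟩ := hfacts l hl
      have hN : (Nfun τ δ l : ℝ) ≤ l ^ (-(τ - δ/2)) + 1 :=
        (Nat.ceil_lt_add_one (hnn _)).le
      have key : l ^ (-(τ - δ/2)) * l^τ = l ^ (δ/2) := by
        rw [← Real.rpow_add hl.1]; ring_nf
      nlinarith [mul_le_mul_of_nonneg_right hN (hnn τ), hnn τ, hnn (δ/2)]
  -- Term 4
  have T4 : Tendsto (fun l : ℝ => (1 - l^(τ-δ))^(Nfun τ δ l + 1))
      (nhdsWithin 0 (Set.Ioo (0:ℝ) 1)) (nhds 0) := by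
    have hup : Tendsto (fun l : ℝ => Real.exp (-(l ^ (-(δ/2)))))
        (nhdsWithin 0 (Set.Ioo (0:ℝ) 1)) (nhds 0) :=
      exp_neg_rpow_tendsto (by linarith : (0:ℝ) < δ/2)
    refine tendsto_of_tendsto_of_tendsto_of_le_of_le' tendsto_const_nhds hup ?_ ?_
    · filter_upwards [hIoo] with l hl
      have := (hfacts l hl).2 (τ-δ) (by linarith)
      have h0 : (0:ℝ) ≤ 1 - l^(τ-δ) := by linarith
      positivity
    · filter_upwards [hIoo] with l hl
      obtain ⟨hnn, hle1⟩ := hfacts l hl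
      have step1 : (1 - l^(τ-δ))^(Nfun τ δ l + 1) ≤
          Real.exp (-(((Nfun τ δ l + 1 : ℕ) : ℝ) * l^(τ-δ))) :=
        one_sub_pow_le_exp (hnn (τ-δ)) (hle1 (τ-δ) (by linarith)) _
      have step2 : l ^ (-(δ/2)) ≤ ((Nfun τ δ l + 1 : ℕ) : ℝ) * l^(τ-δ) := by
        have hN : l ^ (-(τ - δ/2)) ≤ ((Nfun τ δ l + 1 : ℕ) : ℝ) := by
          have := Nat.le_ceil (l ^ (-(τ - δ/2)))
          push_cast
          calc l ^ (-(τ - δ/2)) ≤ (Nfun τ δ l : ℝ) := this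
            _ ≤ (Nfun τ δ l : ℝ) + 1 := by linarith
        have key : l ^ (-(τ - δ/2)) * l^(τ-δ) = l ^ (-(δ/2)) := by
          rw [← Real.rpow_add hl.1]; ring_nf
        calc l ^ (-(δ/2)) = l ^ (-(τ - δ/2)) * l^(τ-δ) := key.symm
          _ ≤ _ := mul_le_mul_of_nonneg_right hN (hnn (τ-δ))
      exact step1.trans (Real.exp_le_exp.mpr (neg_le_neg step2))
  have := ((T1.add T2).add T3).add T4
  simp only [add_zero] at this
  exact this


variable {Ω : Type*} [MeasurableSpace Ω] {μ : Measure Ω} {X Z : ℤ → Ω → ℝ}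

lemma meas_biInter_X
    (hindep : iIndepFun (Sum.elim X Z) μ)
    (F : Finset ℤ) (B : ℤ → Set ℝ) (hB : ∀ k, MeasurableSet (B k)) :
    μ (⋂ k ∈ F, (X k)⁻¹' (B k)) = ∏ k ∈ F, μ ((X k)⁻¹' (B k)) := by
  classical
  have h := hindep.meas_biInter (S := F.map ⟨Sum.inl, Sum.inl_injective⟩)
    (s := fun j => (Sum.elim X Z j) ⁻¹' (Sum.elim B (fun _ => Set.univ) j))
    (fun j _ => ⟨Sum.elim B (fun _ => Set.univ) j, by cases j <;> simp [hB], rfl⟩)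
  rw [Finset.prod_map] at h
  have h2 : (⋂ j ∈ F.map ⟨Sum.inl, Sum.inl_injective⟩,
      (Sum.elim X Z j) ⁻¹' (Sum.elim B (fun _ => Set.univ) j)) =
      ⋂ k ∈ F, (X k)⁻¹' (B k) := by
    ext ω; simp
  rw [h2] at h
  exact h

lemma meas_biInter_Z
    (hindep : iIndepFun (Sum.elim X Z) μ)
    (F : Finset ℤ) (B : ℤ → Set ℝ) (hB : ∀ k, MeasurableSet (B k)) :
    μ (⋂ k ∈ F, (Z k)⁻¹' (B k)) = ∏ k ∈ F, μ ((Z k)⁻¹' (B k)) := by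
  classical
  have h := hindep.meas_biInter (S := F.map ⟨Sum.inr, Sum.inr_injective⟩)
    (s := fun j => (Sum.elim X Z j) ⁻¹' (Sum.elim (fun _ => Set.univ) B j))
    (fun j _ => ⟨Sum.elim (fun _ => Set.univ) B j, by cases j <;> simp [hB], rfl⟩)
  rw [Finset.prod_map] at h
  have h2 : (⋂ j ∈ F.map ⟨Sum.inr, Sum.inr_injective⟩,
      (Sum.elim X Z j) ⁻¹' (Sum.elim (fun _ => Set.univ) B j)) =
      ⋂ k ∈ F, (Z k)⁻¹' (B k) := by
    ext ω; simp
  rw [h2] at h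
  exact h

lemma meas_le_eq [IsProbabilityMeasure μ] {W : Ω → ℝ} (hW : Measurable W)
    (hexp : ∀ s : ℝ, 0 ≤ s → μ {ω | s < W ω} = ENNReal.ofReal (Real.exp (-s)))
    {s : ℝ} (hs : 0 ≤ s) :
    μ (W ⁻¹' Set.Iic s) = ENNReal.ofReal (1 - Real.exp (-s)) := by
  have h1 : (W ⁻¹' Set.Iic s) = {ω | s < W ω}ᶜ := by ext ω; simp [not_lt]
  have h2 : {ω | s < W ω} = W ⁻¹' Set.Ioi s := rfl
  rw [h1, prob_compl_eq_one_sub (by rw [h2]; exact hW measurableSet_Ioi),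
    hexp s hs, ENNReal.ofReal_sub _ (Real.exp_nonneg _), ENNReal.ofReal_one]



lemma event_subset (τ δ l : ℝ) (hτ : 0 < τ) (hδ : 0 < δ) (hl : l ∈ Set.Ioo (0:ℝ) 1)
    (M N : ℕ) :
    {ω | δ ≤ |Xi X Z τ l ω - τ|} ⊆
      (⋂ k ∈ Finset.Icc (1:ℤ) (M:ℤ), X k ⁻¹' Set.Iic (τ * Real.log (1/l))) ∪
      ((⋂ k ∈ Finset.Icc (-(M:ℤ)) (-1), X k ⁻¹' Set.Iic (τ * Real.log (1/l))) ∪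
      ((⋃ i ∈ Finset.Icc (-(M:ℤ)) (M:ℤ), Z i ⁻¹' Set.Ioi ((τ + δ/2) * Real.log (1/l))) ∪
      ((⋃ k ∈ Finset.Icc (0:ℤ) (N:ℤ), X k ⁻¹' Set.Ioi (τ * Real.log (1/l))) ∪
      (⋂ i ∈ Finset.Icc (0:ℤ) (N:ℤ), Z i ⁻¹' Set.Iic ((τ - δ) * Real.log (1/l)))))) := by
  intro ω hω
  set a := Real.log (1/l) with ha_def
  have ha : 0 < a := Real.log_pos (one_lt_one_div hl.1 hl.2)
  set S := (fun i => Z i ω) '' cluster X τ l ω with hS_def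
  have hXi : Xi X Z τ l ω = (1/a) * sSup S := rfl
  simp only [Set.mem_setOf_eq] at hω
  rcases le_abs.mp hω with hup | hlow
  · -- upper deviation : τ + δ ≤ Xi
    have h1 : (τ + δ) * a ≤ sSup S := by
      have := hup
      rw [hXi] at this
      have h2 : τ + δ ≤ (1/a) * sSup S := by linarith
      calc (τ + δ) * a ≤ ((1/a) * sSup S) * a := by
            exact mul_le_mul_of_nonneg_right h2 ha.le
        _ = sSup S := by field_simp
    have hSne : S.Nonempty := by
      by_contra h
      rw [Set.not_nonempty_iff_eq_empty] at h
      rw [h, Real.sSup_empty] at h1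
      nlinarith
    have hlt : (τ + δ/2) * a < sSup S := by
      have : (τ + δ/2) * a < (τ + δ) * a := by nlinarith
      linarith
    obtain ⟨x, hxS, hx⟩ := exists_lt_of_lt_csSup hSne hlt
    obtain ⟨i, hicl, rfl⟩ := hxS
    rcases lt_or_ge i (-(M:ℤ)) with hi | hi
    · -- i < -M : A2
      right; left
      simp only [Set.mem_iInter, Finset.mem_Icc]
      intro k hk
      exact hicl.2 k (Or.inr ⟨le_of_lt (lt_of_lt_of_le hi hk.1), hk.2⟩)
    · rcases le_or_gt i (M:ℤ) with hi2 | hi2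
      · -- A3
        right; right; left
        refine Set.mem_biUnion ?_ hx
        exact Finset.mem_Icc.mpr ⟨hi, hi2⟩
      · -- i > M : A1
        left
        simp only [Set.mem_iInter, Finset.mem_Icc]
        intro k hk
        exact hicl.2 k (Or.inl ⟨hk.1, le_of_lt (lt_of_le_of_lt hk.2 hi2)⟩)
  · -- lower deviation : Xi ≤ τ - δ
    have hXile : Xi X Z τ l ω ≤ τ - δ := by linarith
    by_cases hA1 : ω ∈ ⋂ k ∈ Finset.Icc (1:ℤ) (M:ℤ), X k ⁻¹' Set.Iic (τ * a)
    · exact Or.inl hA1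
    by_cases hA2 : ω ∈ ⋂ k ∈ Finset.Icc (-(M:ℤ)) (-1), X k ⁻¹' Set.Iic (τ * a)
    · exact Or.inr (Or.inl hA2)
    by_cases hA4 : ω ∈ ⋃ k ∈ Finset.Icc (0:ℤ) (N:ℤ), X k ⁻¹' Set.Ioi (τ * a)
    · exact Or.inr (Or.inr (Or.inr (Or.inl hA4)))
    by_cases hA5 : ω ∈ ⋂ i ∈ Finset.Icc (0:ℤ) (N:ℤ), Z i ⁻¹' Set.Iic ((τ - δ) * a)
    · exact Or.inr (Or.inr (Or.inr (Or.inr hA5)))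
    exfalso
    simp only [Set.mem_iInter, Finset.mem_Icc, Set.mem_preimage, Set.mem_Iic, not_forall] at hA1 hA2 hA5
    simp only [Set.mem_iUnion, Finset.mem_Icc, Set.mem_preimage, Set.mem_Ioi, not_exists, not_lt] at hA4
    obtain ⟨k1, hk1, hXk1⟩ := hA1
    obtain ⟨k2, hk2, hXk2⟩ := hA2
    obtain ⟨i, hiN, hZi⟩ := hA5
    rw [not_le] at hXk1 hXk2 hZi
    -- cluster is contained in [-M, M]
    have hsub : cluster X τ l ω ⊆ Set.Icc (-(M:ℤ)) (M:ℤ) := by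
      intro j hj
      constructor
      · by_contra h
        push_neg at h
        exact absurd (hj.2 k2 (Or.inr ⟨by omega, hk2.2⟩)) (not_le.mpr hXk2)
      · by_contra h
        push_neg at h
        exact absurd (hj.2 k1 (Or.inl ⟨hk1.1, by omega⟩)) (not_le.mpr hXk1)
    have hbdd : BddAbove S := by
      apply BddAbove.mono (Set.image_mono (f := fun i => Z i ω) hsub)
      exact ((Set.finite_Icc _ _).image _).bddAbove
    have hicl : i ∈ cluster X τ l ω := by
      refine ⟨hA4 0 ⟨le_refl 0, Int.ofNat_nonneg N⟩, ?_⟩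
      intro k hk
      rcases hk with ⟨hk1', hk2'⟩ | ⟨hk1', hk2'⟩
      · exact hA4 k ⟨by omega, le_trans hk2' hiN.2⟩
      · exfalso; omega
    have hmem : Z i ω ∈ S := ⟨i, hicl, rfl⟩
    have hle : Z i ω ≤ sSup S := le_csSup hbdd hmem
    have : sSup S ≤ (τ - δ) * a := by
      rw [hXi] at hXile
      calc sSup S = ((1/a) * sSup S) * a := by field_simp
        _ ≤ (τ - δ) * a := mul_le_mul_of_nonneg_right hXile ha.le
    linarith

lemma main_bound [IsProbabilityMeasure μ]
    (hmeasX : ∀ i, Measurable (X i)) (hmeasZ : ∀ i, Measurable (Z i))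
    (hindep : iIndepFun (Sum.elim X Z) μ)
    (hexpX : ∀ (i : ℤ) (s : ℝ), 0 ≤ s → μ {ω | s < X i ω} = ENNReal.ofReal (Real.exp (-s)))
    (hexpZ : ∀ (i : ℤ) (s : ℝ), 0 ≤ s → μ {ω | s < Z i ω} = ENNReal.ofReal (Real.exp (-s)))
    (τ δ : ℝ) (hτ : 0 < τ) (hδ : 0 < δ) (hδτ : δ < τ) {l : ℝ} (hl : l ∈ Set.Ioo (0:ℝ) 1) :
    μ {ω | δ ≤ |Xi X Z τ l ω - τ|} ≤ ENNReal.ofReal (gfun τ δ l) := by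
  classical
  set a := Real.log (1/l) with ha_def
  have ha : 0 < a := Real.log_pos (one_lt_one_div hl.1 hl.2)
  set M := Mfun τ δ l with hM_def
  set N := Nfun τ δ l with hN_def
  have hexp_eq : ∀ c : ℝ, Real.exp (-(c * a)) = l ^ c := by
    intro c
    rw [Real.rpow_def_of_pos hl.1, ha_def, one_div, Real.log_inv]
    ring_nf
  -- basic nonnegativity
  have hrpow_le_one : ∀ c : ℝ, 0 ≤ c → l ^ c ≤ 1 := fun c hc =>
    Real.rpow_le_one hl.1.le hl.2.le hc
  have hrpow_nonneg : ∀ c : ℝ, 0 ≤ l ^ c := fun c => Real.rpow_nonneg hl.1.le c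
  -- cardinalities
  have hcard1 : (Finset.Icc (1:ℤ) (M:ℤ)).card = M := by
    rw [Int.card_Icc]; omega
  have hcard2 : (Finset.Icc (-(M:ℤ)) (-1)).card = M := by
    rw [Int.card_Icc]; omega
  have hcard3 : (Finset.Icc (-(M:ℤ)) (M:ℤ)).card = 2*M+1 := by
    rw [Int.card_Icc]; omega
  have hcard4 : (Finset.Icc (0:ℤ) (N:ℤ)).card = N+1 := by
    rw [Int.card_Icc]; omega
  -- single probabilities
  have hXle : ∀ k : ℤ, μ (X k ⁻¹' Set.Iic (τ * a)) = ENNReal.ofReal (1 - l^τ) := by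
    intro k
    rw [meas_le_eq (hmeasX k) (hexpX k) (by positivity), hexp_eq τ]
  have hZle : ∀ i : ℤ, μ (Z i ⁻¹' Set.Iic ((τ - δ) * a)) = ENNReal.ofReal (1 - l^(τ-δ)) := by
    intro i
    rw [meas_le_eq (hmeasZ i) (hexpZ i) (by nlinarith), hexp_eq (τ-δ)]
  have hZgt : ∀ i : ℤ, μ (Z i ⁻¹' Set.Ioi ((τ + δ/2) * a)) = ENNReal.ofReal (l^(τ+δ/2)) := by
    intro i
    have := hexpZ i ((τ + δ/2) * a) (by positivity)
    rw [hexp_eq (τ+δ/2)] at this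
    exact this
  have hXgt : ∀ k : ℤ, μ (X k ⁻¹' Set.Ioi (τ * a)) = ENNReal.ofReal (l^τ) := by
    intro k
    have := hexpX k (τ * a) (by positivity)
    rw [hexp_eq τ] at this
    exact this
  -- measures of the 5 pieces
  have hA1 : μ (⋂ k ∈ Finset.Icc (1:ℤ) (M:ℤ), X k ⁻¹' Set.Iic (τ * a))
      = ENNReal.ofReal ((1 - l^τ)^M) := by
    rw [meas_biInter_X hindep _ _ (fun _ => measurableSet_Iic)]
    simp only [hXle]
    rw [Finset.prod_const, hcard1, ← ENNReal.ofReal_pow (by linarith [hrpow_le_one τ hτ.le])]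
  have hA2 : μ (⋂ k ∈ Finset.Icc (-(M:ℤ)) (-1), X k ⁻¹' Set.Iic (τ * a))
      = ENNReal.ofReal ((1 - l^τ)^M) := by
    rw [meas_biInter_X hindep _ _ (fun _ => measurableSet_Iic)]
    simp only [hXle]
    rw [Finset.prod_const, hcard2, ← ENNReal.ofReal_pow (by linarith [hrpow_le_one τ hτ.le])]
  have hA5 : μ (⋂ i ∈ Finset.Icc (0:ℤ) (N:ℤ), Z i ⁻¹' Set.Iic ((τ - δ) * a))
      = ENNReal.ofReal ((1 - l^(τ-δ))^(N+1)) := by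
    rw [meas_biInter_Z hindep _ _ (fun _ => measurableSet_Iic)]
    simp only [hZle]
    rw [Finset.prod_const, hcard4,
      ← ENNReal.ofReal_pow (by linarith [hrpow_le_one (τ-δ) (by linarith)])]
  have hA3 : μ (⋃ i ∈ Finset.Icc (-(M:ℤ)) (M:ℤ), Z i ⁻¹' Set.Ioi ((τ + δ/2) * a))
      ≤ ENNReal.ofReal ((2*(M:ℝ)+1) * l^(τ+δ/2)) := by
    refine (measure_biUnion_finset_le _ _).trans ?_
    simp only [hZgt]
    rw [Finset.sum_const, hcard3, nsmul_eq_mul,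
      ← ENNReal.ofReal_natCast, ← ENNReal.ofReal_mul (by positivity)]
    apply ENNReal.ofReal_le_ofReal
    apply mul_le_mul_of_nonneg_right _ (hrpow_nonneg _)
    push_cast; linarith
  have hA4 : μ (⋃ k ∈ Finset.Icc (0:ℤ) (N:ℤ), X k ⁻¹' Set.Ioi (τ * a))
      ≤ ENNReal.ofReal (((N:ℝ)+1) * l^τ) := by
    refine (measure_biUnion_finset_le _ _).trans ?_
    simp only [hXgt]
    rw [Finset.sum_const, hcard4, nsmul_eq_mul,
      ← ENNReal.ofReal_natCast, ← ENNReal.ofReal_mul (by positivity)]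
    apply ENNReal.ofReal_le_ofReal
    apply mul_le_mul_of_nonneg_right _ (hrpow_nonneg _)
    push_cast; linarith
  -- combine
  calc μ {ω | δ ≤ |Xi X Z τ l ω - τ|}
      ≤ μ ((⋂ k ∈ Finset.Icc (1:ℤ) (M:ℤ), X k ⁻¹' Set.Iic (τ * a)) ∪
        ((⋂ k ∈ Finset.Icc (-(M:ℤ)) (-1), X k ⁻¹' Set.Iic (τ * a)) ∪
        ((⋃ i ∈ Finset.Icc (-(M:ℤ)) (M:ℤ), Z i ⁻¹' Set.Ioi ((τ + δ/2) * a)) ∪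
        ((⋃ k ∈ Finset.Icc (0:ℤ) (N:ℤ), X k ⁻¹' Set.Ioi (τ * a)) ∪
        (⋂ i ∈ Finset.Icc (0:ℤ) (N:ℤ), Z i ⁻¹' Set.Iic ((τ - δ) * a)))))) :=
      measure_mono (event_subset τ δ l hτ hδ hl M N)
    _ ≤ μ (⋂ k ∈ Finset.Icc (1:ℤ) (M:ℤ), X k ⁻¹' Set.Iic (τ * a)) +
        (μ (⋂ k ∈ Finset.Icc (-(M:ℤ)) (-1), X k ⁻¹' Set.Iic (τ * a)) +
        (μ (⋃ i ∈ Finset.Icc (-(M:ℤ)) (M:ℤ), Z i ⁻¹' Set.Ioi ((τ + δ/2) * a)) +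
        (μ (⋃ k ∈ Finset.Icc (0:ℤ) (N:ℤ), X k ⁻¹' Set.Ioi (τ * a)) +
        μ (⋂ i ∈ Finset.Icc (0:ℤ) (N:ℤ), Z i ⁻¹' Set.Iic ((τ - δ) * a))))) := by
      refine (measure_union_le _ _).trans (add_le_add (le_refl _) ?_)
      refine (measure_union_le _ _).trans (add_le_add (le_refl _) ?_)
      refine (measure_union_le _ _).trans (add_le_add (le_refl _) ?_)
      exact measure_union_le _ _
    _ ≤ ENNReal.ofReal (gfun τ δ l) := by
      rw [hA1, hA2, hA5]
      have h1 : 0 ≤ (1 - l^τ)^M := by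
        apply pow_nonneg; linarith [hrpow_le_one τ hτ.le]
      have h2 : 0 ≤ (2*(M:ℝ)+1) * l^(τ+δ/2) :=
        mul_nonneg (by positivity) (hrpow_nonneg _)
      have h3 : 0 ≤ ((N:ℝ)+1) * l^τ := mul_nonneg (by positivity) (hrpow_nonneg _)
      have h4 : 0 ≤ (1 - l^(τ-δ))^(N+1) := by
        apply pow_nonneg; linarith [hrpow_le_one (τ-δ) (by linarith)]
      calc _ ≤ ENNReal.ofReal ((1 - l^τ)^M) + (ENNReal.ofReal ((1 - l^τ)^M) +
            (ENNReal.ofReal ((2*(M:ℝ)+1) * l^(τ+δ/2)) +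
            (ENNReal.ofReal (((N:ℝ)+1) * l^τ) + ENNReal.ofReal ((1 - l^(τ-δ))^(N+1))))) := by
            gcongr
        _ = ENNReal.ofReal (gfun τ δ l) := by
            rw [← ENNReal.ofReal_add h3 h4, ← ENNReal.ofReal_add h2 (add_nonneg h3 h4),
              ← ENNReal.ofReal_add h1 (add_nonneg h2 (add_nonneg h3 h4)),
              ← ENNReal.ofReal_add h1 (add_nonneg h1 (add_nonneg h2 (add_nonneg h3 h4)))]
            congr 1
            rw [gfun]
            push_cast
            ring

end S11

theorem statement11
    {Ω : Type*} [MeasurableSpace Ω] (μ : Measure Ω) [IsProbabilityMeasure μ]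
    (X Z : ℤ → Ω → ℝ)
    (hmeasX : ∀ i, Measurable (X i)) (hmeasZ : ∀ i, Measurable (Z i))
    (hindep : iIndepFun (Sum.elim X Z) μ)
    (hexpX : ∀ (i : ℤ) (s : ℝ), 0 ≤ s → μ {ω | s < X i ω} = ENNReal.ofReal (Real.exp (-s)))
    (hexpZ : ∀ (i : ℤ) (s : ℝ), 0 ≤ s → μ {ω | s < Z i ω} = ENNReal.ofReal (Real.exp (-s)))
    (τ : ℝ) (hτ : 0 < τ) (δ : ℝ) (hδ : 0 < δ) :
    Tendsto (fun l : ℝ => μ {ω | δ ≤ |Xi X Z τ l ω - τ|})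
      (nhdsWithin 0 (Set.Ioo 0 1)) (nhds 0) := by
  set δ' := min δ (τ/2) with hd'def
  have hδ'pos : 0 < δ' := lt_min hδ (by linarith)
  have hδ'τ : δ' < τ := lt_of_le_of_lt (min_le_right _ _) (by linarith)
  have hδ'δ : δ' ≤ δ := min_le_left _ _
  have hup : Tendsto (fun l : ℝ => ENNReal.ofReal (S11.gfun τ δ' l))
      (nhdsWithin 0 (Set.Ioo (0:ℝ) 1)) (nhds 0) := by
    have := ENNReal.tendsto_ofReal (S11.gfun_tendsto τ δ' hτ hδ'pos hδ'τ)
    simpa using this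
  refine tendsto_of_tendsto_of_tendsto_of_le_of_le' tendsto_const_nhds hup
    (Eventually.of_forall fun l => zero_le) ?_
  filter_upwards [self_mem_nhdsWithin] with l hl
  calc μ {ω | δ ≤ |Xi X Z τ l ω - τ|}
      ≤ μ {ω | δ' ≤ |Xi X Z τ l ω - τ|} :=
        measure_mono (fun ω hω => le_trans hδ'δ hω)
    _ ≤ ENNReal.ofReal (S11.gfun τ δ' l) :=
        S11.main_bound hmeasX hmeasZ hindep hexpX hexpZ τ δ' hτ hδ'pos hδ'τ hl
end
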